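/- arXiv:2101.03417 — 6 statements merged into one kernel-verified Lean document; each statement's English description precedes it below -/
import Mathlib

section
/- The bounded linear operator Φ : 𝒱 × 𝒬 → 𝒱' × 𝒬' defined by Φ(u,p) = (Au + B*p, Bu) is bijective (an isomorphism of Banach spaces). In particular, if û ∈ 𝒱 and p̂ ∈ 𝒬 satisfy Aû + B*p̂ = 0 and Bû = 0, then û = 0 and p̂ = 0. -/
open MeasureTheory Real Set
open scoped ENNReal

noncomputable section

variable {V Q : Type*}
  [NormedAddCommGroup V] [InnerProductSpace ℝ V] [CompleteSpace V]
  [NormedAddCommGroup Q] [InnerProductSpace ℝ Q] [CompleteSpace Q]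

open scoped InnerProductSpace

set_option maxHeartbeats 1000000 in
theorem brezzi_aux
    (A : V →L[ℝ] V) (Bc : V →L[ℝ] Q) (Bs : Q →L[ℝ] V)
    (hadj : ∀ (v : V) (q : Q), ⟪Bc v, q⟫_ℝ = ⟪v, Bs q⟫_ℝ)
    (α₀ : ℝ) (hα₀ : 0 < α₀)
    (hcoer : ∀ v : V, Bc v = 0 → α₀ * ‖v‖ ^ 2 ≤ ⟪A v, v⟫_ℝ)
    (β : ℝ) (hβ : 0 < β)
    (hinfsup : ∀ q : Q, β * ‖q‖ ≤ ‖Bs q‖) :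
    Function.Bijective (fun z : V × Q => (A z.1 + Bs z.2, Bc z.1)) := by
  have hβinv : (0:ℝ) < β⁻¹ := inv_pos.mpr hβ
  have hBs_anti : AntilipschitzWith ⟨β⁻¹, hβinv.le⟩ Bs := by
    apply Bs.antilipschitz_of_bound
    intro q
    have h := hinfsup q
    have hb : β * β⁻¹ = 1 := mul_inv_cancel₀ hβ.ne'
    show ‖q‖ ≤ β⁻¹ * ‖Bs q‖
    nlinarith [norm_nonneg (Bs q)]
  have hBs_closed : IsClosed (Set.range Bs) := hBs_anti.isClosed_range Bs.uniformContinuous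
  set K : Submodule ℝ V := LinearMap.ker (Bc : V →ₗ[ℝ] Q) with hK
  have hK_closed : IsClosed (K : Set V) := ContinuousLinearMap.isClosed_ker Bc
  haveI : CompleteSpace K := hK_closed.completeSpace_coe
  haveI : CompleteSpace (Kᗮ : Submodule ℝ V) := K.isClosed_orthogonal.completeSpace_coe
  -- range Bs ⊆ Kᗮ
  have hrange_le : LinearMap.range (Bs : Q →ₗ[ℝ] V) ≤ Kᗮ := by
    rintro x ⟨q, rfl⟩
    intro v hv
    have hv' : Bc v = 0 := hv
    rw [ContinuousLinearMap.coe_coe, ← hadj, hv', inner_zero_left]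
  -- Kᗮ ⊆ range Bs
  have hKperp : Kᗮ ≤ LinearMap.range (Bs : Q →ₗ[ℝ] V) := by
    have h1 : (LinearMap.range (Bs : Q →ₗ[ℝ] V))ᗮ ≤ K := by
      intro v hv
      have h0 : ⟪Bs (Bc v), v⟫_ℝ = 0 := hv _ ⟨Bc v, rfl⟩
      have h2 : ⟪Bc v, Bc v⟫_ℝ = 0 := by
        rw [hadj, real_inner_comm]; exact h0
      exact inner_self_eq_zero.mp h2
    have h2 : Kᗮ ≤ (LinearMap.range (Bs : Q →ₗ[ℝ] V))ᗮᗮ := Submodule.orthogonal_le h1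
    rwa [Submodule.orthogonal_orthogonal_eq_closure,
      IsClosed.submodule_topologicalClosure_eq (by rwa [LinearMap.coe_range])] at h2
  -- Bc is bounded below on Kᗮ
  have hBcKperp : ∀ w ∈ Kᗮ, β * ‖w‖ ≤ ‖Bc w‖ := by
    intro w hw
    obtain ⟨q, rfl⟩ := hKperp hw
    rcases eq_or_ne q 0 with rfl | hq
    · simp
    · have hq' : (0:ℝ) < ‖q‖ := norm_pos_iff.mpr hq
      have h1 : ‖Bs q‖ * ‖Bs q‖ = ⟪Bc (Bs q), q⟫_ℝ := by
        rw [hadj, real_inner_self_eq_norm_mul_norm]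
      have h2 : ⟪Bc (Bs q), q⟫_ℝ ≤ ‖Bc (Bs q)‖ * ‖q‖ := real_inner_le_norm _ _
      have h3 : β * ‖Bs q‖ * ‖q‖ ≤ ‖Bc (Bs q)‖ * ‖q‖ := by
        calc β * ‖Bs q‖ * ‖q‖ = (β * ‖q‖) * ‖Bs q‖ := by ring
        _ ≤ ‖Bs q‖ * ‖Bs q‖ := mul_le_mul_of_nonneg_right (hinfsup q) (norm_nonneg _)
        _ ≤ ‖Bc (Bs q)‖ * ‖q‖ := h1 ▸ h2
      exact le_of_mul_le_mul_right h3 hq'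
  -- kernel is trivial
  have hker : ∀ (u : V) (p : Q), A u + Bs p = 0 → Bc u = 0 → u = 0 ∧ p = 0 := by
    intro u p h1 h2
    have hu : u = 0 := by
      have hinner : ⟪A u + Bs p, u⟫_ℝ = 0 := by rw [h1, inner_zero_left]
      have hBsp : ⟪Bs p, u⟫_ℝ = 0 := by
        rw [real_inner_comm, ← hadj, h2, inner_zero_left]
      have hAu : ⟪A u, u⟫_ℝ = 0 := by
        rw [inner_add_left, hBsp, add_zero] at hinner; exact hinner
      have hle := hcoer u h2
      rw [hAu] at hle
      have hn : ‖u‖ ^ 2 ≤ 0 := by nlinarith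
      have : ‖u‖ = 0 := by nlinarith [sq_nonneg ‖u‖, norm_nonneg u, sq_abs ‖u‖]
      exact norm_eq_zero.mp this
    refine ⟨hu, ?_⟩
    rw [hu, map_zero, zero_add] at h1
    have := hinfsup p
    rw [h1, norm_zero] at this
    have : ‖p‖ ≤ 0 := by nlinarith
    exact norm_eq_zero.mp (le_antisymm this (norm_nonneg p))
  constructor
  · -- injectivity
    intro z1 z2 h
    have h1 : A z1.1 + Bs z1.2 = A z2.1 + Bs z2.2 := congrArg Prod.fst h
    have h2 : Bc z1.1 = Bc z2.1 := congrArg Prod.snd h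
    have e1 : A (z1.1 - z2.1) + Bs (z1.2 - z2.2) = 0 := by
      simp only [map_sub]
      rw [sub_add_sub_comm, sub_eq_zero]
      exact h1
    have e2 : Bc (z1.1 - z2.1) = 0 := by rw [map_sub, sub_eq_zero]; exact h2
    obtain ⟨hu, hp⟩ := hker _ _ e1 e2
    have := sub_eq_zero.mp hu
    have := sub_eq_zero.mp hp
    exact Prod.ext (sub_eq_zero.mp hu) (sub_eq_zero.mp hp)
  · -- surjectivity
    rintro ⟨f, g⟩
    -- solve Bc w = g with w ∈ Kᗮ
    set Bc' : (Kᗮ : Submodule ℝ V) →L[ℝ] Q := Bc.comp (Kᗮ).subtypeL with hBc'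
    have hBc'_anti : AntilipschitzWith ⟨β⁻¹, hβinv.le⟩ Bc' := by
      apply Bc'.antilipschitz_of_bound
      intro w
      have h := hBcKperp (w : V) w.2
      have hgen : ∀ x y : ℝ, β * x ≤ y → x ≤ β⁻¹ * y := by
        intro x y hxy
        calc x = β⁻¹ * (β * x) := by field_simp
          _ ≤ β⁻¹ * y := mul_le_mul_of_nonneg_left hxy hβinv.le
      exact hgen _ _ h
    have hBc'_closed : IsClosed (Set.range Bc') := hBc'_anti.isClosed_range Bc'.uniformContinuous
    have hBc'_surj : LinearMap.range (Bc' : (Kᗮ : Submodule ℝ V) →ₗ[ℝ] Q) = ⊤ := by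
      have horth : (LinearMap.range (Bc' : (Kᗮ : Submodule ℝ V) →ₗ[ℝ] Q))ᗮ = ⊥ := by
        rw [Submodule.eq_bot_iff]
        intro q hq
        have hmem : Bs q ∈ Kᗮ := hrange_le ⟨q, rfl⟩
        have h0 : ⟪Bc' ⟨Bs q, hmem⟩, q⟫_ℝ = 0 := hq _ ⟨⟨Bs q, hmem⟩, rfl⟩
        have h1 : ⟪Bs q, Bs q⟫_ℝ = 0 := by rw [← hadj]; exact h0
        have h2 : Bs q = 0 := inner_self_eq_zero.mp h1
        have := hinfsup q
        rw [h2, norm_zero] at this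
        have : ‖q‖ ≤ 0 := by nlinarith
        exact norm_eq_zero.mp (le_antisymm this (norm_nonneg q))
      have := congrArg Submodule.orthogonal horth
      rwa [Submodule.orthogonal_orthogonal_eq_closure,
        IsClosed.submodule_topologicalClosure_eq (by rwa [LinearMap.coe_range]),
        Submodule.bot_orthogonal_eq_top] at this
    obtain ⟨w', hw'⟩ := LinearMap.range_eq_top.mp hBc'_surj g
    set w : V := (w' : V) with hwdef
    -- Lax-Milgram on K
    set M : K →L[ℝ] V →L[ℝ] ℝ := (innerSL ℝ).comp (A.comp K.subtypeL) with hM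
    set aK : K →L[ℝ] K →L[ℝ] ℝ := (M.flip.comp K.subtypeL).flip with haK
    have haK_apply : ∀ u₀ v₀ : K, aK u₀ v₀ = ⟪A (u₀ : V), (v₀ : V)⟫_ℝ := fun _ _ => rfl
    have hcoK : IsCoercive aK := by
      refine ⟨α₀, hα₀, fun u₀ => ?_⟩
      have hmem : Bc (u₀ : V) = 0 := u₀.2
      have := hcoer (u₀ : V) hmem
      rw [haK_apply]
      calc α₀ * ‖u₀‖ * ‖u₀‖ = α₀ * ‖(u₀ : V)‖ ^ 2 := by rw [sq]; ring_nf; rfl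
        _ ≤ ⟪A (u₀ : V), (u₀ : V)⟫_ℝ := this
    set x : V := f - A w with hx
    set u₀ : K := hcoK.continuousLinearEquivOfBilin.symm (K.orthogonalProjectionOnto x) with hu₀
    have hLM : ∀ v₀ : K, ⟪A (u₀ : V), (v₀ : V)⟫_ℝ = ⟪x, (v₀ : V)⟫_ℝ := by
      intro v₀
      have h1 : ⟪hcoK.continuousLinearEquivOfBilin u₀, v₀⟫_ℝ = aK u₀ v₀ :=
        hcoK.continuousLinearEquivOfBilin_apply u₀ v₀
      rw [hu₀, ContinuousLinearEquiv.apply_symm_apply] at h1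
      have h2 : ⟪x - (K.orthogonalProjectionOnto x : V), (v₀ : V)⟫_ℝ = 0 := by
        rw [real_inner_comm]
        exact (Submodule.sub_starProjection_mem_orthogonal (K := K) x) _ v₀.2
      rw [inner_sub_left, sub_eq_zero] at h2
      rw [haK_apply] at h1
      rw [← h1, Submodule.coe_inner]
      exact h2.symm
    set u : V := (u₀ : V) + w with hu
    have hfAu : f - A u ∈ Kᗮ := by
      intro v₀ hv₀
      have := hLM ⟨v₀, hv₀⟩
      rw [real_inner_comm]
      rw [inner_sub_left, sub_eq_zero, hu, map_add, inner_add_left]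
      rw [hx, inner_sub_left] at this
      simp only [Submodule.coe_mk] at this ⊢
      linarith [this]
    obtain ⟨p, hp⟩ := hKperp hfAu
    refine ⟨(u, p), ?_⟩
    simp only
    rw [Prod.mk.injEq]
    constructor
    · rw [ContinuousLinearMap.coe_coe] at hp; rw [hp]; abel
    · rw [hu, map_add]
      have h1 : Bc (u₀ : V) = 0 := u₀.2
      rw [h1, zero_add, hwdef]
      exact hw'

theorem brezzi_operator_bijective
    (a : V →L[ℝ] V →L[ℝ] ℝ) (b : V →L[ℝ] Q →L[ℝ] ℝ)
    (hsym : ∀ v w : V, a v w = a w v)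
    (α₀ : ℝ) (hα₀ : 0 < α₀)
    (hcoer : ∀ v : V, b v = 0 → α₀ * ‖v‖ ^ 2 ≤ a v v)
    (β : ℝ) (hβ : 0 < β)
    (hinfsup : ∀ q : Q, β * ‖q‖ ≤ ‖b.flip q‖)
    :
    Function.Bijective
      (⇑(((a.comp (ContinuousLinearMap.fst ℝ V Q)
          + b.flip.comp (ContinuousLinearMap.snd ℝ V Q)).prod
            (b.comp (ContinuousLinearMap.fst ℝ V Q))) :
        V × Q →L[ℝ] (V →L[ℝ] ℝ) × (Q →L[ℝ] ℝ)))
    ∧ ∀ (uhat : V) (phat : Q), a uhat + b.flip phat = 0 → b uhat = 0 → uhat = 0 ∧ phat = 0 := by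
  set JV := InnerProductSpace.toDual ℝ V with hJV
  set JQ := InnerProductSpace.toDual ℝ Q with hJQ
  set A : V →L[ℝ] V :=
    (JV.symm.toContinuousLinearEquiv.toContinuousLinearMap).comp a with hA
  set Bc : V →L[ℝ] Q :=
    (JQ.symm.toContinuousLinearEquiv.toContinuousLinearMap).comp b with hBc
  set Bs : Q →L[ℝ] V :=
    (JV.symm.toContinuousLinearEquiv.toContinuousLinearMap).comp b.flip with hBs
  have hAv : ∀ v : V, A v = JV.symm (a v) := fun _ => rfl
  have hBcv : ∀ v : V, Bc v = JQ.symm (b v) := fun _ => rfl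
  have hBsq : ∀ q : Q, Bs q = JV.symm (b.flip q) := fun _ => rfl
  have hAinner : ∀ v w : V, ⟪A v, w⟫_ℝ = a v w := fun v w => by
    rw [hAv]; exact InnerProductSpace.toDual_symm_apply
  have hBcinner : ∀ (v : V) (q : Q), ⟪Bc v, q⟫_ℝ = b v q := fun v q => by
    rw [hBcv]; exact InnerProductSpace.toDual_symm_apply
  have hBsinner : ∀ (q : Q) (v : V), ⟪Bs q, v⟫_ℝ = b v q := fun q v => by
    rw [hBsq]; exact InnerProductSpace.toDual_symm_apply
  have hadj : ∀ (v : V) (q : Q), ⟪Bc v, q⟫_ℝ = ⟪v, Bs q⟫_ℝ := fun v q => by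
    rw [hBcinner, real_inner_comm, hBsinner]
  have hcoer' : ∀ v : V, Bc v = 0 → α₀ * ‖v‖ ^ 2 ≤ ⟪A v, v⟫_ℝ := by
    intro v hv
    rw [hBcv] at hv
    have hbv : b v = 0 := by
      have := congrArg JQ hv
      rwa [LinearIsometryEquiv.apply_symm_apply, map_zero] at this
    rw [hAinner]
    exact hcoer v hbv
  have hinf' : ∀ q : Q, β * ‖q‖ ≤ ‖Bs q‖ := by
    intro q
    rw [hBsq, LinearIsometryEquiv.norm_map]
    exact hinfsup q
  have hT := brezzi_aux A Bc Bs hadj α₀ hα₀ hcoer' β hβ hinf'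
  have hEbij : Function.Bijective
      (fun y : V × Q => ((JV y.1 : V →L[ℝ] ℝ), (JQ y.2 : Q →L[ℝ] ℝ))) := by
    constructor
    · intro y1 y2 h
      have h1 := congrArg Prod.fst h
      have h2 := congrArg Prod.snd h
      exact Prod.ext (JV.injective h1) (JQ.injective h2)
    · rintro ⟨f, g⟩
      exact ⟨(JV.symm f, JQ.symm g), by
        simp [LinearIsometryEquiv.apply_symm_apply]⟩
  have hcomp : ⇑(((a.comp (ContinuousLinearMap.fst ℝ V Q)
          + b.flip.comp (ContinuousLinearMap.snd ℝ V Q)).prod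
            (b.comp (ContinuousLinearMap.fst ℝ V Q))) :
        V × Q →L[ℝ] (V →L[ℝ] ℝ) × (Q →L[ℝ] ℝ))
      = (fun y : V × Q => ((JV y.1 : V →L[ℝ] ℝ), (JQ y.2 : Q →L[ℝ] ℝ)))
        ∘ (fun z : V × Q => (A z.1 + Bs z.2, Bc z.1)) := by
    funext z
    simp only [ContinuousLinearMap.prod_apply, ContinuousLinearMap.add_apply,
      ContinuousLinearMap.coe_comp', Function.comp_apply,
      ContinuousLinearMap.coe_fst', ContinuousLinearMap.coe_snd']
    rw [Prod.mk.injEq]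
    refine ⟨?_, ?_⟩
    · rw [map_add, hAv, hBsq, LinearIsometryEquiv.apply_symm_apply,
        LinearIsometryEquiv.apply_symm_apply]
    · rw [hBcv, LinearIsometryEquiv.apply_symm_apply]
  have hmain : Function.Bijective
      (⇑(((a.comp (ContinuousLinearMap.fst ℝ V Q)
          + b.flip.comp (ContinuousLinearMap.snd ℝ V Q)).prod
            (b.comp (ContinuousLinearMap.fst ℝ V Q))) :
        V × Q →L[ℝ] (V →L[ℝ] ℝ) × (Q →L[ℝ] ℝ))) := by
    rw [hcomp]
    exact hEbij.comp hT
  refine ⟨hmain, ?_⟩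
  intro uhat phat h1 h2
  have hz : (fun z : V × Q => (A z.1 + Bs z.2, Bc z.1)) (uhat, phat)
      = (fun z : V × Q => (A z.1 + Bs z.2, Bc z.1)) (0, 0) := by
    simp only [map_zero, add_zero, zero_add]
    rw [Prod.mk.injEq]
    constructor
    · rw [hAv, hBsq, ← map_add, h1, map_zero]
    · rw [hBcv, h2, map_zero]
  have := hT.injective hz
  rw [Prod.mk.injEq] at this
  exact ⟨this.1, this.2⟩
end
end

section
/- Any solution (u,p) of the mixed Volterra problem satisfies ‖u‖_{L¹(J;𝒱)} ≤ C₁‖f‖_{L¹(J;𝒱')} + C₂‖g‖_{L¹(J;𝒬')}, where C₁ := (1/α₀)[1 + TM e^{TM}] and C₂ := (1/β)[1 + ‖a‖/α₀][1 + TM e^{TM}] with M := (‖a‖/α₀)C_{k̃} + C_{k₃}. -/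
open MeasureTheory Real Set
open scoped ENNReal

set_option maxHeartbeats 2000000

noncomputable section

variable {V Q : Type*}
  [NormedAddCommGroup V] [InnerProductSpace ℝ V] [CompleteSpace V]
  [NormedAddCommGroup Q] [InnerProductSpace ℝ Q] [CompleteSpace Q]

open scoped RealInnerProductSpace in
/-- Solvability of `b w = G` with the inf-sup bound `‖w‖ ≤ ‖G‖ / β`. -/
lemma infsup_solve (b : V →L[ℝ] Q →L[ℝ] ℝ) (β : ℝ) (hβ : 0 < β)
    (hinf : ∀ q : Q, β * ‖q‖ ≤ ‖b.flip q‖) (G : Q →L[ℝ] ℝ) :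
    ∃ w : V, (∀ q, b w q = G q) ∧ ‖w‖ ≤ (1 / β) * ‖G‖ := by
  classical
  set D : Q → V := fun q => (InnerProductSpace.toDual ℝ V).symm (b.flip q) with hDdef
  have hDin : ∀ q v, ⟪D q, v⟫ = b v q := fun q v =>
    InnerProductSpace.toDual_symm_apply
  have hDnorm : ∀ q, ‖D q‖ = ‖b.flip q‖ := fun q =>
    LinearIsometryEquiv.norm_map _ _
  have hDadd : ∀ q q', D (q + q') = D q + D q' := by
    intro q q'
    apply ext_inner_right ℝ
    intro v
    rw [hDin, inner_add_left, hDin, hDin, map_add]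
  have hDsmul : ∀ (c : ℝ) q, D (c • q) = c • D q := by
    intro c q
    apply ext_inner_right ℝ
    intro v
    rw [hDin, real_inner_smul_left, hDin]
    simp
  set c₀ : Q →ₗ[ℝ] Q →ₗ[ℝ] ℝ := LinearMap.mk₂ ℝ (fun q r => ⟪D q, D r⟫)
    (by intro m m' n; simp only [hDadd, inner_add_left])
    (by intro c m n; simp only [hDsmul, real_inner_smul_left, smul_eq_mul])
    (by intro m n n'; simp only [hDadd, inner_add_right])
    (by intro c m n; simp only [hDsmul, real_inner_smul_right, smul_eq_mul]) with hc₀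
  set c : Q →L[ℝ] Q →L[ℝ] ℝ := LinearMap.mkContinuous₂ c₀ (‖b.flip‖ * ‖b.flip‖)
    (by
      intro q r
      have h1 : ‖⟪D q, D r⟫‖ ≤ ‖D q‖ * ‖D r‖ := by
        simpa using abs_real_inner_le_norm (D q) (D r)
      refine h1.trans ?_
      rw [hDnorm, hDnorm]
      calc ‖b.flip q‖ * ‖b.flip r‖ ≤ (‖b.flip‖ * ‖q‖) * (‖b.flip‖ * ‖r‖) :=
            mul_le_mul (b.flip.le_opNorm q) (b.flip.le_opNorm r) (norm_nonneg _)
              (by positivity)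
        _ = ‖b.flip‖ * ‖b.flip‖ * ‖q‖ * ‖r‖ := by ring) with hc
  have hcapp : ∀ q r, c q r = ⟪D q, D r⟫ := fun q r => rfl
  have coercive : IsCoercive c := by
    refine ⟨β * β, by positivity, fun q => ?_⟩
    have h1 : β * ‖q‖ ≤ ‖D q‖ := by rw [hDnorm]; exact hinf q
    have h2 : c q q = ‖D q‖ * ‖D q‖ := by
      rw [hcapp, real_inner_self_eq_norm_mul_norm]
    rw [h2]
    calc β * β * ‖q‖ * ‖q‖ = (β * ‖q‖) * (β * ‖q‖) := by ring
      _ ≤ ‖D q‖ * ‖D q‖ := mul_le_mul h1 h1 (by positivity) (norm_nonneg _)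
  set E := coercive.continuousLinearEquivOfBilin with hE
  set g₀ : Q := (InnerProductSpace.toDual ℝ Q).symm G with hg₀
  have hg₀in : ∀ q, ⟪g₀, q⟫ = G q := fun q =>
    InnerProductSpace.toDual_symm_apply
  set z : Q := E.symm g₀ with hz
  have hcz : ∀ r, c z r = G r := by
    intro r
    have h1 : ⟪E z, r⟫ = c z r := coercive.continuousLinearEquivOfBilin_apply z r
    have h2 : E z = g₀ := E.apply_symm_apply g₀
    rw [← h1, h2, hg₀in]
  refine ⟨D z, fun q => ?_, ?_⟩
  · rw [← hDin q (D z), real_inner_comm, ← hcapp z q]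
    exact hcz q
  · have hw1 : ‖D z‖ * ‖D z‖ = G z := by
      rw [← real_inner_self_eq_norm_mul_norm, ← hcapp z z]
      exact hcz z
    have hw2 : β * ‖z‖ ≤ ‖D z‖ := by rw [hDnorm]; exact hinf z
    have hw3 : G z ≤ ‖G‖ * ‖z‖ := by
      calc G z ≤ ‖G z‖ := le_abs_self _
        _ ≤ ‖G‖ * ‖z‖ := G.le_opNorm z
    have hmain : β * ‖D z‖ ≤ ‖G‖ := by
      rcases eq_or_lt_of_le (norm_nonneg (D z)) with h0 | h0
      · rw [← h0, mul_zero]; exact norm_nonneg G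
      · have h4 : ‖D z‖ * (β * ‖D z‖) ≤ ‖D z‖ * ‖G‖ := by
          calc ‖D z‖ * (β * ‖D z‖) = β * (‖D z‖ * ‖D z‖) := by ring
            _ = β * G z := by rw [hw1]
            _ ≤ β * (‖G‖ * ‖z‖) := mul_le_mul_of_nonneg_left hw3 hβ.le
            _ = ‖G‖ * (β * ‖z‖) := by ring
            _ ≤ ‖G‖ * ‖D z‖ := mul_le_mul_of_nonneg_left hw2 (norm_nonneg G)
            _ = ‖D z‖ * ‖G‖ := by ring
        exact le_of_mul_le_mul_left h4 h0
    calc ‖D z‖ = (1 / β) * (β * ‖D z‖) := by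
          rw [one_div, inv_mul_cancel_left₀ hβ.ne']
      _ ≤ (1 / β) * ‖G‖ := mul_le_mul_of_nonneg_left hmain (by positivity)

/-- `(u, p)` is a solution of the mixed Volterra problem on `J = [0, T]`:
for a.e. `t ∈ J` and all `(v, q) ∈ 𝒱 × 𝒬`,
`a(u(t),v) + b(v,p(t)) = ⟨f(t),v⟩ + ∫₀ᵗ [k₁(t,s)a(u(s),v) + k₂(t,s)b(v,p(s))] ds` and
`b(u(t),q) = ⟨g(t),q⟩ + ∫₀ᵗ k₃(t,s)b(u(s),q) ds`. -/
def MixedVolterraSol (T : ℝ)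
    (a : V →L[ℝ] V →L[ℝ] ℝ) (b : V →L[ℝ] Q →L[ℝ] ℝ)
    (k₁ k₂ k₃ : ℝ → ℝ → ℝ)
    (f : ℝ → V →L[ℝ] ℝ) (g : ℝ → Q →L[ℝ] ℝ)
    (u : ℝ → V) (p : ℝ → Q) : Prop :=
  ∀ᵐ t ∂(volume.restrict (Icc (0:ℝ) T)),
    (∀ v : V, a (u t) v + b v (p t)
        = f t v + ∫ s in (0:ℝ)..t, (k₁ t s * a (u s) v + k₂ t s * b v (p s))) ∧
    ∀ q : Q, b (u t) q = g t q + ∫ s in (0:ℝ)..t, k₃ t s * b (u s) q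

theorem mixed_volterra_u_estimate
    (T : ℝ) (hT : 0 ≤ T)
    (a : V →L[ℝ] V →L[ℝ] ℝ) (b : V →L[ℝ] Q →L[ℝ] ℝ)
    (hsym : ∀ v w : V, a v w = a w v)
    (α₀ : ℝ) (hα₀ : 0 < α₀)
    (hcoer : ∀ v : V, b v = 0 → α₀ * ‖v‖ ^ 2 ≤ a v v)
    (β : ℝ) (hβ : 0 < β)
    (hinfsup : ∀ q : Q, β * ‖q‖ ≤ ‖b.flip q‖)
    (k₁ k₂ k₃ : ℝ → ℝ → ℝ)
    (hk₁c : ContinuousOn (fun ts : ℝ × ℝ => k₁ ts.1 ts.2)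
      {ts : ℝ × ℝ | 0 ≤ ts.2 ∧ ts.2 ≤ ts.1 ∧ ts.1 ≤ T})
    (hk₂c : ContinuousOn (fun ts : ℝ × ℝ => k₂ ts.1 ts.2)
      {ts : ℝ × ℝ | 0 ≤ ts.2 ∧ ts.2 ≤ ts.1 ∧ ts.1 ≤ T})
    (hk₃c : ContinuousOn (fun ts : ℝ × ℝ => k₃ ts.1 ts.2)
      {ts : ℝ × ℝ | 0 ≤ ts.2 ∧ ts.2 ≤ ts.1 ∧ ts.1 ≤ T})
    (Ck₁ Ck₂ Ck₃ : ℝ) (hCk₁ : 0 ≤ Ck₁) (hCk₂ : 0 ≤ Ck₂) (hCk₃ : 0 ≤ Ck₃)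
    (hk₁b : ∀ t s : ℝ, 0 ≤ s → s ≤ t → t ≤ T → |k₁ t s| ≤ Ck₁)
    (hk₂b : ∀ t s : ℝ, 0 ≤ s → s ≤ t → t ≤ T → |k₂ t s| ≤ Ck₂)
    (hk₃b : ∀ t s : ℝ, 0 ≤ s → s ≤ t → t ≤ T → |k₃ t s| ≤ Ck₃)
    (Ckt : ℝ) (hCkt : 0 ≤ Ckt)
    (hktb : ∀ t s : ℝ, 0 ≤ s → s ≤ t → t ≤ T → |k₁ t s - k₃ t s| ≤ Ckt)
    (f : ℝ → V →L[ℝ] ℝ) (g : ℝ → Q →L[ℝ] ℝ)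
    (hf : IntegrableOn f (Icc 0 T)) (hg : IntegrableOn g (Icc 0 T))
    (u : ℝ → V) (p : ℝ → Q)
    (hu : IntegrableOn u (Icc 0 T)) (hp : IntegrableOn p (Icc 0 T))
    (hsol : MixedVolterraSol T a b k₁ k₂ k₃ f g u p)
    (M C₁ C₂ : ℝ)
    (hM : M = (‖a‖ / α₀) * Ckt + Ck₃)
    (hC₁ : C₁ = (1 / α₀) * (1 + T * M * exp (T * M)))
    (hC₂ : C₂ = (1 / β) * (1 + ‖a‖ / α₀) * (1 + T * M * exp (T * M))) :
    (∫ t in Icc (0:ℝ) T, ‖u t‖)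
      ≤ C₁ * (∫ t in Icc (0:ℝ) T, ‖f t‖) + C₂ * (∫ t in Icc (0:ℝ) T, ‖g t‖) := by
  have hann : (0:ℝ) ≤ ‖a‖ := norm_nonneg a
  have hM0 : 0 ≤ M := by rw [hM]; positivity
  -- the cumulative L¹ norm of u, as a continuous function on all of ℝ
  set ub : ℝ → ℝ := (Icc (0:ℝ) T).indicator (fun s => ‖u s‖) with hubdef
  have hubint : Integrable ub := (integrable_indicator_iff measurableSet_Icc).mpr hu.norm
  have hubnn : ∀ s, 0 ≤ ub s := fun s => Set.indicator_nonneg (fun x _ => norm_nonneg _) s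
  have hubii : ∀ c d : ℝ, IntervalIntegrable ub volume c d := fun c d => hubint.intervalIntegrable
  set φ : ℝ → ℝ := fun t => ∫ s in (0:ℝ)..t, ub s with hφdef
  have hφcont : Continuous φ := intervalIntegral.continuous_primitive hubii 0
  have hφnn : ∀ t, 0 ≤ t → 0 ≤ φ t := fun t ht =>
    intervalIntegral.integral_nonneg ht (fun s _ => hubnn s)
  have hφeq : ∀ t, 0 ≤ t → t ≤ T → (∫ s in (0:ℝ)..t, ‖u s‖) = φ t := by
    intro t h0 hT'
    apply intervalIntegral.integral_congr
    intro s hs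
    rw [uIcc_of_le h0] at hs
    exact (Set.indicator_of_mem (show s ∈ Icc (0:ℝ) T from ⟨hs.1, hs.2.trans hT'⟩)
      (fun s => ‖u s‖)).symm
  -- Step 1: the pointwise a.e. estimate
  have key : ∀ᵐ t ∂(volume.restrict (Icc (0:ℝ) T)),
      ‖u t‖ ≤ (1/α₀) * ‖f t‖ + (1/β) * (1 + ‖a‖/α₀) * ‖g t‖ + M * φ t := by
    filter_upwards [hsol, ae_restrict_mem measurableSet_Icc] with t ht htmem
    obtain ⟨ht1, ht2⟩ := ht
    obtain ⟨ht0, htT⟩ := htmem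
    have hφt0 : 0 ≤ φ t := hφnn t ht0
    -- kernels are continuous in s on [0, t]
    have hmapsTo : MapsTo (fun s : ℝ => ((t, s) : ℝ × ℝ)) (Icc 0 t)
        {ts : ℝ × ℝ | 0 ≤ ts.2 ∧ ts.2 ≤ ts.1 ∧ ts.1 ≤ T} := fun s hs => ⟨hs.1, hs.2, htT⟩
    have hk1s : ContinuousOn (fun s => k₁ t s) (Icc 0 t) :=
      hk₁c.comp ((continuous_const.prodMk continuous_id).continuousOn) hmapsTo
    have hk3s : ContinuousOn (fun s => k₃ t s) (Icc 0 t) :=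
      hk₃c.comp ((continuous_const.prodMk continuous_id).continuousOn) hmapsTo
    have huloc : IntegrableOn u (Icc 0 t) := hu.mono_set (Icc_subset_Icc le_rfl htT)
    have huII : IntervalIntegrable (fun s => ‖u s‖) volume 0 t := by
      apply IntegrableOn.intervalIntegrable
      rw [uIcc_of_le ht0]
      exact huloc.norm
    -- interval integrability of k₃ • u
    have hk3u : IntervalIntegrable (fun s => k₃ t s • u s) volume 0 t := by
      apply IntegrableOn.intervalIntegrable
      rw [uIcc_of_le ht0]
      refine Integrable.mono' (huloc.norm.const_mul Ck₃)
        ((hk3s.aestronglyMeasurable measurableSet_Icc).smul huloc.aestronglyMeasurable) ?_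
      filter_upwards [ae_restrict_mem measurableSet_Icc] with s hs
      rw [norm_smul, Real.norm_eq_abs]
      exact mul_le_mul_of_nonneg_right (hk₃b t s hs.1 hs.2 htT) (norm_nonneg _)
    obtain ⟨I3, hI3def⟩ : ∃ x : V, x = ∫ s in (0:ℝ)..t, k₃ t s • u s := ⟨_, rfl⟩
    obtain ⟨ut, hutdef⟩ : ∃ x : V, x = u t - I3 := ⟨_, rfl⟩
    -- `b ut q = g t q`
    have hbut : ∀ q : Q, b ut q = g t q := by
      intro q
      have h1 := (b.flip q).intervalIntegral_comp_comm hk3u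
      simp only [ContinuousLinearMap.flip_apply, _root_.map_smul,
        ContinuousLinearMap.smul_apply, smul_eq_mul] at h1
      rw [← hI3def] at h1
      rw [hutdef, map_sub, ContinuousLinearMap.sub_apply, ht2 q, ← h1]
      ring
    obtain ⟨w, hw1, hw2⟩ := infsup_solve b β hβ hinfsup (g t)
    obtain ⟨u₀, hu₀def⟩ : ∃ x : V, x = ut - w := ⟨_, rfl⟩
    have hbu₀ : b u₀ = 0 := by
      ext q
      rw [hu₀def, map_sub, ContinuousLinearMap.sub_apply, hbut, hw1]
      simp
    have hcoer₀ := hcoer u₀ hbu₀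
    -- integrability of the scalar integrands
    have hAmeas : AEStronglyMeasurable (fun s => a (u s) u₀) (volume.restrict (Icc 0 t)) := by
      have := (a.flip u₀).continuous.comp_aestronglyMeasurable huloc.aestronglyMeasurable
      simpa using this
    have hint1 : IntervalIntegrable (fun s => k₁ t s * a (u s) u₀) volume 0 t := by
      apply IntegrableOn.intervalIntegrable
      rw [uIcc_of_le ht0]
      refine Integrable.mono' (huloc.norm.const_mul (Ck₁ * (‖a‖ * ‖u₀‖)))
        ((hk1s.aestronglyMeasurable measurableSet_Icc).mul hAmeas) ?_
      filter_upwards [ae_restrict_mem measurableSet_Icc] with s hs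
      rw [norm_mul, Real.norm_eq_abs]
      calc |k₁ t s| * ‖a (u s) u₀‖ ≤ Ck₁ * (‖a‖ * ‖u s‖ * ‖u₀‖) :=
            mul_le_mul (hk₁b t s hs.1 hs.2 htT) (a.le_opNorm₂ (u s) u₀) (norm_nonneg _) hCk₁
        _ = Ck₁ * (‖a‖ * ‖u₀‖) * ‖u s‖ := by ring
    have hint3 : IntervalIntegrable (fun s => k₃ t s * a (u s) u₀) volume 0 t := by
      apply IntegrableOn.intervalIntegrable
      rw [uIcc_of_le ht0]
      refine Integrable.mono' (huloc.norm.const_mul (Ck₃ * (‖a‖ * ‖u₀‖)))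
        ((hk3s.aestronglyMeasurable measurableSet_Icc).mul hAmeas) ?_
      filter_upwards [ae_restrict_mem measurableSet_Icc] with s hs
      rw [norm_mul, Real.norm_eq_abs]
      calc |k₃ t s| * ‖a (u s) u₀‖ ≤ Ck₃ * (‖a‖ * ‖u s‖ * ‖u₀‖) :=
            mul_le_mul (hk₃b t s hs.1 hs.2 htT) (a.le_opNorm₂ (u s) u₀) (norm_nonneg _) hCk₃
        _ = Ck₃ * (‖a‖ * ‖u₀‖) * ‖u s‖ := by ring
    -- `a` applied to the integral I3
    have haI3 : a I3 u₀ = ∫ s in (0:ℝ)..t, k₃ t s * a (u s) u₀ := by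
      have h1 := (a.flip u₀).intervalIntegral_comp_comm hk3u
      simp only [ContinuousLinearMap.flip_apply, _root_.map_smul,
        ContinuousLinearMap.smul_apply, smul_eq_mul] at h1
      rw [← hI3def] at h1
      exact h1.symm
    -- first equation tested with u₀
    have hfirst : a (u t) u₀ = f t u₀ + ∫ s in (0:ℝ)..t, k₁ t s * a (u s) u₀ := by
      have h1 := ht1 u₀
      rw [hbu₀] at h1
      simpa using h1
    have haut : a ut u₀ = f t u₀ + ∫ s in (0:ℝ)..t, (k₁ t s - k₃ t s) * a (u s) u₀ := by
      rw [hutdef, map_sub, ContinuousLinearMap.sub_apply, hfirst, haI3]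
      have hsplit : (∫ s in (0:ℝ)..t, (k₁ t s - k₃ t s) * a (u s) u₀)
          = (∫ s in (0:ℝ)..t, k₁ t s * a (u s) u₀) - ∫ s in (0:ℝ)..t, k₃ t s * a (u s) u₀ := by
        rw [← intervalIntegral.integral_sub hint1 hint3]
        congr 1
        funext s
        ring
      rw [hsplit]
      ring
    -- bound on the Volterra integral term
    have hφt : (∫ s in (0:ℝ)..t, ‖u s‖) = φ t := hφeq t ht0 htT
    have hIbound : |∫ s in (0:ℝ)..t, (k₁ t s - k₃ t s) * a (u s) u₀|
        ≤ Ckt * (‖a‖ * ‖u₀‖) * φ t := by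
      have hb1 : ∀ᵐ s ∂volume.restrict (uIoc 0 t),
          ‖(k₁ t s - k₃ t s) * a (u s) u₀‖ ≤ (Ckt * (‖a‖ * ‖u₀‖)) * ‖u s‖ := by
        filter_upwards [ae_restrict_mem measurableSet_uIoc] with s hs
        rw [uIoc_of_le ht0] at hs
        rw [norm_mul, Real.norm_eq_abs]
        calc |k₁ t s - k₃ t s| * ‖a (u s) u₀‖ ≤ Ckt * (‖a‖ * ‖u s‖ * ‖u₀‖) :=
              mul_le_mul (hktb t s hs.1.le hs.2 htT) (a.le_opNorm₂ (u s) u₀)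
                (norm_nonneg _) hCkt
          _ = Ckt * (‖a‖ * ‖u₀‖) * ‖u s‖ := by ring
      have h2 := intervalIntegral.norm_integral_le_abs_of_norm_le hb1 (huII.const_mul _)
      rw [Real.norm_eq_abs] at h2
      refine h2.trans ?_
      rw [intervalIntegral.integral_const_mul, hφt, abs_of_nonneg (by positivity)]
    have hI3bound : ‖I3‖ ≤ Ck₃ * φ t := by
      have hb1 : ∀ᵐ s ∂volume.restrict (uIoc 0 t), ‖k₃ t s • u s‖ ≤ Ck₃ * ‖u s‖ := by
        filter_upwards [ae_restrict_mem measurableSet_uIoc] with s hs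
        rw [uIoc_of_le ht0] at hs
        rw [norm_smul, Real.norm_eq_abs]
        exact mul_le_mul_of_nonneg_right (hk₃b t s hs.1.le hs.2 htT) (norm_nonneg _)
      have h2 := intervalIntegral.norm_integral_le_abs_of_norm_le hb1 (huII.const_mul _)
      rw [hI3def]
      refine h2.trans ?_
      rw [intervalIntegral.integral_const_mul, hφt, abs_of_nonneg (by positivity)]
    -- coercivity estimate for u₀
    have hau₀ : a u₀ u₀
        = f t u₀ + (∫ s in (0:ℝ)..t, (k₁ t s - k₃ t s) * a (u s) u₀) - a w u₀ := by
      nth_rewrite 1 [hu₀def]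
      rw [map_sub, ContinuousLinearMap.sub_apply, haut]
    have hfb : f t u₀ ≤ ‖f t‖ * ‖u₀‖ := le_trans (le_abs_self _) ((f t).le_opNorm u₀)
    have hwb : -(a w u₀) ≤ ‖a‖ * ‖w‖ * ‖u₀‖ :=
      le_trans (neg_le_abs _) (a.le_opNorm₂ w u₀)
    have hJb : (∫ s in (0:ℝ)..t, (k₁ t s - k₃ t s) * a (u s) u₀)
        ≤ Ckt * (‖a‖ * ‖u₀‖) * φ t := le_trans (le_abs_self _) hIbound
    rw [hau₀] at hcoer₀
    have hquad : α₀ * (‖u₀‖ * ‖u₀‖) ≤ (‖f t‖ + Ckt * ‖a‖ * φ t + ‖a‖ * ‖w‖) * ‖u₀‖ := by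
      nlinarith [hcoer₀, hfb, hwb, hJb]
    have hRnn : 0 ≤ ‖f t‖ + Ckt * ‖a‖ * φ t + ‖a‖ * ‖w‖ := by
      have : 0 ≤ Ckt * ‖a‖ * φ t := mul_nonneg (mul_nonneg hCkt hann) hφt0
      positivity
    have hu₀n : ‖u₀‖ ≤ (1/α₀) * (‖f t‖ + Ckt * ‖a‖ * φ t + ‖a‖ * ‖w‖) := by
      rcases eq_or_lt_of_le (norm_nonneg u₀) with h0 | h0
      · rw [← h0]
        exact mul_nonneg (by positivity) hRnn
      · have h4 : (α₀ * ‖u₀‖) * ‖u₀‖ ≤ (‖f t‖ + Ckt * ‖a‖ * φ t + ‖a‖ * ‖w‖) * ‖u₀‖ := by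
          calc (α₀ * ‖u₀‖) * ‖u₀‖ = α₀ * (‖u₀‖ * ‖u₀‖) := by ring
            _ ≤ _ := hquad
        have h5 : α₀ * ‖u₀‖ ≤ ‖f t‖ + Ckt * ‖a‖ * φ t + ‖a‖ * ‖w‖ :=
          le_of_mul_le_mul_right h4 h0
        calc ‖u₀‖ = (1/α₀) * (α₀ * ‖u₀‖) := by
              rw [one_div, inv_mul_cancel_left₀ hα₀.ne']
          _ ≤ _ := mul_le_mul_of_nonneg_left h5 (by positivity)
    -- assemble the pointwise bound
    have hut' : u t = u₀ + w + I3 := by rw [hu₀def, hutdef]; abel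
    have hutn : ‖u t‖ ≤ ‖u₀‖ + ‖w‖ + ‖I3‖ := by
      rw [hut']
      exact (norm_add_le _ _).trans (add_le_add_left (norm_add_le _ _) _)
    have haw : (‖a‖/α₀) * ‖w‖ ≤ (‖a‖/α₀) * ((1/β) * ‖g t‖) :=
      mul_le_mul_of_nonneg_left hw2 (by positivity)
    have hu₀n' : ‖u₀‖ ≤ (1/α₀)*‖f t‖ + (‖a‖/α₀)*Ckt*φ t + (‖a‖/α₀)*‖w‖ :=
      hu₀n.trans (le_of_eq (by ring))
    rw [hM]
    linarith [hu₀n', haw, hw2, hI3bound, hutn, hφt0]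
  -- Step 2: integrated inequality
  set Fn : ℝ := ∫ t in Icc (0:ℝ) T, ‖f t‖ with hFn
  set Gn : ℝ := ∫ t in Icc (0:ℝ) T, ‖g t‖ with hGn
  have hFn0 : 0 ≤ Fn := setIntegral_nonneg measurableSet_Icc (fun t _ => norm_nonneg _)
  have hGn0 : 0 ≤ Gn := setIntegral_nonneg measurableSet_Icc (fun t _ => norm_nonneg _)
  set C : ℝ := (1/α₀) * Fn + (1/β) * (1 + ‖a‖/α₀) * Gn with hC
  have hC0 : 0 ≤ C :=
    add_nonneg (mul_nonneg (by positivity) hFn0) (mul_nonneg (by positivity) hGn0)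
  have hstep : ∀ r ∈ Icc (0:ℝ) T, φ r ≤ C + M * ∫ s in (0:ℝ)..r, φ s := by
    rintro r ⟨hr0, hrT⟩
    have hsub : Icc (0:ℝ) r ⊆ Icc (0:ℝ) T := Icc_subset_Icc le_rfl hrT
    have h1 : φ r = ∫ s in Icc (0:ℝ) r, ub s := by
      simp only [hφdef]
      rw [intervalIntegral.integral_of_le hr0, ← integral_Icc_eq_integral_Ioc]
    have h2 : ∀ᵐ s ∂(volume.restrict (Icc (0:ℝ) r)),
        ub s ≤ (1/α₀)*‖f s‖ + (1/β)*(1+‖a‖/α₀)*‖g s‖ + M * φ s := by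
      filter_upwards [ae_restrict_of_ae_restrict_of_subset hsub key,
        ae_restrict_mem measurableSet_Icc] with s hs hsmem
      calc ub s = ‖u s‖ := Set.indicator_of_mem (hsub hsmem) _
        _ ≤ _ := hs
    have hfn : IntegrableOn (fun s => ‖f s‖) (Icc (0:ℝ) r) :=
      MeasureTheory.IntegrableOn.mono_set hf.norm hsub
    have hgn : IntegrableOn (fun s => ‖g s‖) (Icc (0:ℝ) r) :=
      MeasureTheory.IntegrableOn.mono_set hg.norm hsub
    have hintf : IntegrableOn (fun s => (1/α₀)*‖f s‖) (Icc (0:ℝ) r) := hfn.const_mul _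
    have hintg : IntegrableOn (fun s => (1/β)*(1+‖a‖/α₀)*‖g s‖) (Icc (0:ℝ) r) :=
      hgn.const_mul _
    have hintφ : IntegrableOn (fun s => M * φ s) (Icc (0:ℝ) r) :=
      (hφcont.integrableOn_Icc).const_mul _
    have hintfg : IntegrableOn (fun s => (1/α₀)*‖f s‖ + (1/β)*(1+‖a‖/α₀)*‖g s‖)
        (Icc (0:ℝ) r) := hintf.add hintg
    have hintall : IntegrableOn
        (fun s => (1/α₀)*‖f s‖ + (1/β)*(1+‖a‖/α₀)*‖g s‖ + M * φ s) (Icc (0:ℝ) r) :=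
      hintfg.add hintφ
    have h3 := integral_mono_ae (hubint.integrableOn) hintall h2
    rw [integral_add hintfg hintφ, integral_add hintf hintg,
      integral_const_mul, integral_const_mul, integral_const_mul] at h3
    have h4 : (∫ s in Icc (0:ℝ) r, ‖f s‖) ≤ Fn :=
      setIntegral_mono_set hf.norm (ae_of_all _ fun s => norm_nonneg _)
        (HasSubset.Subset.eventuallyLE hsub)
    have h5 : (∫ s in Icc (0:ℝ) r, ‖g s‖) ≤ Gn :=
      setIntegral_mono_set hg.norm (ae_of_all _ fun s => norm_nonneg _)
        (HasSubset.Subset.eventuallyLE hsub)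
    have h6 : (∫ s in Icc (0:ℝ) r, φ s) = ∫ s in (0:ℝ)..r, φ s := by
      rw [integral_Icc_eq_integral_Ioc, intervalIntegral.integral_of_le hr0]
    rw [h6] at h3
    have h7 : (1/α₀) * (∫ s in Icc (0:ℝ) r, ‖f s‖) ≤ (1/α₀) * Fn :=
      mul_le_mul_of_nonneg_left h4 (by positivity)
    have h8 : (1/β)*(1+‖a‖/α₀) * (∫ s in Icc (0:ℝ) r, ‖g s‖) ≤ (1/β)*(1+‖a‖/α₀) * Gn :=
      mul_le_mul_of_nonneg_left h5 (by positivity)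
    rw [h1, hC]
    linarith [h3, h7, h8]
  -- Step 3: Gronwall
  set F2 : ℝ → ℝ := fun r => ∫ s in (0:ℝ)..r, φ s with hF2def
  have hF2cont : ContinuousOn F2 (Icc (0:ℝ) T) :=
    (intervalIntegral.continuous_primitive (fun c d => hφcont.intervalIntegrable c d) 0).continuousOn
  have hF2deriv : ∀ x ∈ Ico (0:ℝ) T, HasDerivWithinAt F2 (φ x) (Ici x) x := fun x _ =>
    (intervalIntegral.integral_hasDerivAt_right (hφcont.intervalIntegrable 0 x)
      (hφcont.stronglyMeasurable.stronglyMeasurableAtFilter) hφcont.continuousAt).hasDerivWithinAt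
  have hF2nn : ∀ x, 0 ≤ x → 0 ≤ F2 x := fun x hx =>
    intervalIntegral.integral_nonneg hx (fun s hs => hφnn s hs.1)
  have hF20 : ‖F2 0‖ ≤ 0 := by
    have : F2 0 = 0 := intervalIntegral.integral_same
    rw [this, norm_zero]
  have hbound : ∀ x ∈ Ico (0:ℝ) T, ‖φ x‖ ≤ M * ‖F2 x‖ + C := by
    intro x hx
    rw [Real.norm_eq_abs, Real.norm_eq_abs, abs_of_nonneg (hφnn x hx.1),
      abs_of_nonneg (hF2nn x hx.1)]
    have := hstep x ⟨hx.1, hx.2.le⟩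
    linarith
  have hgron := norm_le_gronwallBound_of_norm_deriv_right_le hF2cont hF2deriv hF20 hbound T
    (right_mem_Icc.mpr hT)
  have hexp : exp (M*T) - 1 ≤ M*T*exp (M*T) := by
    have h1 : -(M*T) + 1 ≤ exp (-(M*T)) := Real.add_one_le_exp _
    have h2 : exp (-(M*T)) * exp (M*T) = 1 := by rw [← Real.exp_add]; simp
    nlinarith [Real.exp_pos (M*T)]
  have hcommE : exp (M*T) = exp (T*M) := by rw [mul_comm]
  have hgb : gronwallBound 0 M C (T - 0) ≤ C * (T * exp (T * M)) := by
    rcases eq_or_lt_of_le hM0 with hM' | hM'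
    · rw [← hM', gronwallBound_K0]
      simp
    · rw [gronwallBound_of_K_ne_0 hM'.ne', sub_zero]
      have h3 : C / M * (exp (M*T) - 1) ≤ C / M * (M*T*exp (M*T)) :=
        mul_le_mul_of_nonneg_left hexp (by positivity)
      have h4 : C / M * (M*T*exp (M*T)) = C * (T * exp (T*M)) := by
        rw [← hcommE]
        field_simp
      simp only [zero_mul, zero_add]
      linarith [h3, h4]
  have hφT : φ T ≤ C + M * F2 T := hstep T (right_mem_Icc.mpr hT)
  have hF2T : F2 T ≤ C * (T * exp (T*M)) := by
    have h1 := hgron.trans hgb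
    rwa [Real.norm_eq_abs, abs_of_nonneg (hF2nn T hT)] at h1
  have hLHS : (∫ t in Icc (0:ℝ) T, ‖u t‖) = φ T := by
    rw [integral_Icc_eq_integral_Ioc, ← intervalIntegral.integral_of_le hT, hφeq T hT le_rfl]
  rw [hLHS]
  have h9 : M * F2 T ≤ M * (C * (T * exp (T*M))) := mul_le_mul_of_nonneg_left hF2T hM0
  have h10 : C₁ * Fn + C₂ * Gn = C + M * (C * (T * exp (T*M))) := by
    rw [hC₁, hC₂, hC]; ring
  linarith [hφT, h9, h10]
end
end

section
/- Any solution (u,p) of the mixed Volterra problem satisfies, for a.e. t ∈ J, the integral inequality ‖u(t)‖_𝒱 ≤ (1/α₀)‖f(t)‖_{𝒱'} + (1/β)(1 + ‖a‖/α₀)‖g(t)‖_{𝒬'} + ((‖a‖/α₀)C_{k̃} + C_{k₃}) ∫₀ᵗ ‖u(s)‖_𝒱 ds. -/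
open MeasureTheory Real Set
open scoped ENNReal

noncomputable section

variable {V Q : Type*}
  [NormedAddCommGroup V] [InnerProductSpace ℝ V] [CompleteSpace V]
  [NormedAddCommGroup Q] [InnerProductSpace ℝ Q] [CompleteSpace Q]

open scoped RealInnerProductSpace in
lemma surj_bound_aux (b : V →L[ℝ] Q →L[ℝ] ℝ) (β : ℝ) (hβ : 0 < β)
    (hinfsup : ∀ q : Q, β * ‖q‖ ≤ ‖b.flip q‖) (G : Q →L[ℝ] ℝ) :
    ∃ w : V, b w = G ∧ ‖w‖ ≤ (1 / β) * ‖G‖ := by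
  set S : Q →L[ℝ] V := LinearMap.mkContinuous
    { toFun := fun q => (InnerProductSpace.toDual ℝ V).symm (b.flip q)
      map_add' := by intro q r; simp
      map_smul' := by intro c q; simp }
    ‖b.flip‖ (fun q => by
      simpa using (b.flip).le_opNorm q) with hSdef
  have hS : ∀ (q : Q) (v : V), ⟪S q, v⟫ = b v q := by
    intro q v
    simp [hSdef, LinearMap.mkContinuous_apply, InnerProductSpace.toDual_symm_apply]
  have hSnorm : ∀ q : Q, ‖S q‖ = ‖b.flip q‖ := by
    intro q
    simp [hSdef]
  set B₂ : Q →L[ℝ] Q →L[ℝ] ℝ := b.comp S with hB₂def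
  have hB₂ : ∀ q r : Q, B₂ q r = ⟪S r, S q⟫ := by
    intro q r; rw [hS]; rfl
  have coercive : IsCoercive B₂ := by
    refine ⟨β * β, mul_pos hβ hβ, fun q => ?_⟩
    have h1 : β * ‖q‖ ≤ ‖S q‖ := by rw [hSnorm]; exact hinfsup q
    have h2 : B₂ q q = ‖S q‖ * ‖S q‖ := by
      rw [hB₂, real_inner_self_eq_norm_mul_norm]
    rw [h2]
    calc β * β * ‖q‖ * ‖q‖ = (β * ‖q‖) * (β * ‖q‖) := by ring
      _ ≤ ‖S q‖ * ‖S q‖ :=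
        mul_le_mul h1 h1 (by positivity) (norm_nonneg _)
  set E := coercive.continuousLinearEquivOfBilin with hEdef
  set gq : Q := (InnerProductSpace.toDual ℝ Q).symm G with hgq
  set q₀ : Q := E.symm gq with hq₀
  have hEq₀ : E q₀ = gq := E.apply_symm_apply gq
  have hlm : ∀ r : Q, G r = B₂ q₀ r := by
    intro r
    rw [← coercive.continuousLinearEquivOfBilin_apply q₀ r, ← hEdef, hEq₀, hgq,
      InnerProductSpace.toDual_symm_apply]
  refine ⟨S q₀, ?_, ?_⟩
  · ext r
    rw [hlm r]; rfl
  · have h1 : ‖S q₀‖ * ‖S q₀‖ = B₂ q₀ q₀ := by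
      rw [hB₂, real_inner_self_eq_norm_mul_norm]
    have h2 : B₂ q₀ q₀ = G q₀ := (hlm q₀).symm
    have h3 : G q₀ ≤ ‖G‖ * ‖q₀‖ := by
      calc G q₀ ≤ ‖G q₀‖ := le_abs_self _
        _ ≤ ‖G‖ * ‖q₀‖ := G.le_opNorm q₀
    have h4 : β * ‖q₀‖ ≤ ‖S q₀‖ := by rw [hSnorm]; exact hinfsup q₀
    rcases eq_or_lt_of_le (norm_nonneg (S q₀)) with h0 | h0
    · rw [← h0]; positivity
    · have key : β * (‖S q₀‖ * ‖S q₀‖) ≤ ‖G‖ * ‖S q₀‖ := by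
        calc β * (‖S q₀‖ * ‖S q₀‖) = β * (B₂ q₀ q₀) := by rw [h1]
          _ = β * (G q₀) := by rw [h2]
          _ ≤ β * (‖G‖ * ‖q₀‖) := by
              exact mul_le_mul_of_nonneg_left h3 hβ.le
          _ = ‖G‖ * (β * ‖q₀‖) := by ring
          _ ≤ ‖G‖ * ‖S q₀‖ := mul_le_mul_of_nonneg_left h4 (norm_nonneg _)
      have hβS : β * ‖S q₀‖ ≤ ‖G‖ := by
        refine le_of_mul_le_mul_right ?_ h0
        rw [mul_assoc]; exact key
      rw [div_mul_eq_mul_div, one_mul, le_div_iff₀ hβ]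
      linarith [hβS]

lemma kernel_smul_intervalIntegrable {E : Type*} [NormedAddCommGroup E] [NormedSpace ℝ E]
    {u : ℝ → E} {t : ℝ} (ht : 0 ≤ t) (hu : IntegrableOn u (Icc 0 t))
    {k : ℝ → ℝ} (hk : ContinuousOn k (Icc 0 t))
    {C : ℝ} (hC : ∀ s ∈ Icc (0:ℝ) t, |k s| ≤ C) :
    IntervalIntegrable (fun s => k s • u s) volume 0 t := by
  rw [intervalIntegrable_iff_integrableOn_Icc_of_le ht]
  have hm : AEStronglyMeasurable (fun s => k s • u s) (volume.restrict (Icc 0 t)) :=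
    (hk.aestronglyMeasurable measurableSet_Icc).smul hu.aestronglyMeasurable
  refine Integrable.mono' (hu.norm.const_mul C) hm ?_
  filter_upwards [ae_restrict_mem measurableSet_Icc] with s hs
  rw [norm_smul, Real.norm_eq_abs]
  exact mul_le_mul_of_nonneg_right (hC s hs) (norm_nonneg _)

set_option maxHeartbeats 1000000 in
theorem mixed_volterra_pointwise_integral_inequality
    (T : ℝ) (hT : 0 ≤ T)
    (a : V →L[ℝ] V →L[ℝ] ℝ) (b : V →L[ℝ] Q →L[ℝ] ℝ)
    (hsym : ∀ v w : V, a v w = a w v)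
    (α₀ : ℝ) (hα₀ : 0 < α₀)
    (hcoer : ∀ v : V, b v = 0 → α₀ * ‖v‖ ^ 2 ≤ a v v)
    (β : ℝ) (hβ : 0 < β)
    (hinfsup : ∀ q : Q, β * ‖q‖ ≤ ‖b.flip q‖)
    (k₁ k₂ k₃ : ℝ → ℝ → ℝ)
    (hk₁c : ContinuousOn (fun ts : ℝ × ℝ => k₁ ts.1 ts.2)
      {ts : ℝ × ℝ | 0 ≤ ts.2 ∧ ts.2 ≤ ts.1 ∧ ts.1 ≤ T})
    (hk₂c : ContinuousOn (fun ts : ℝ × ℝ => k₂ ts.1 ts.2)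
      {ts : ℝ × ℝ | 0 ≤ ts.2 ∧ ts.2 ≤ ts.1 ∧ ts.1 ≤ T})
    (hk₃c : ContinuousOn (fun ts : ℝ × ℝ => k₃ ts.1 ts.2)
      {ts : ℝ × ℝ | 0 ≤ ts.2 ∧ ts.2 ≤ ts.1 ∧ ts.1 ≤ T})
    (Ck₁ Ck₂ Ck₃ : ℝ) (hCk₁ : 0 ≤ Ck₁) (hCk₂ : 0 ≤ Ck₂) (hCk₃ : 0 ≤ Ck₃)
    (hk₁b : ∀ t s : ℝ, 0 ≤ s → s ≤ t → t ≤ T → |k₁ t s| ≤ Ck₁)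
    (hk₂b : ∀ t s : ℝ, 0 ≤ s → s ≤ t → t ≤ T → |k₂ t s| ≤ Ck₂)
    (hk₃b : ∀ t s : ℝ, 0 ≤ s → s ≤ t → t ≤ T → |k₃ t s| ≤ Ck₃)
    (Ckt : ℝ) (hCkt : 0 ≤ Ckt)
    (hktb : ∀ t s : ℝ, 0 ≤ s → s ≤ t → t ≤ T → |k₁ t s - k₃ t s| ≤ Ckt)
    (f : ℝ → V →L[ℝ] ℝ) (g : ℝ → Q →L[ℝ] ℝ)
    (hf : IntegrableOn f (Icc 0 T)) (hg : IntegrableOn g (Icc 0 T))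
    (u : ℝ → V) (p : ℝ → Q)
    (hu : IntegrableOn u (Icc 0 T)) (hp : IntegrableOn p (Icc 0 T))
    (hsol : MixedVolterraSol T a b k₁ k₂ k₃ f g u p)
    :
    ∀ᵐ t ∂(volume.restrict (Icc (0:ℝ) T)),
      ‖u t‖ ≤ (1 / α₀) * ‖f t‖ + (1 / β) * (1 + ‖a‖ / α₀) * ‖g t‖
        + ((‖a‖ / α₀) * Ckt + Ck₃) * ∫ s in (0:ℝ)..t, ‖u s‖ := by
  filter_upwards [hsol, ae_restrict_mem measurableSet_Icc] with t hts ht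
  obtain ⟨eq1, eq2⟩ := hts
  have ht0 : (0:ℝ) ≤ t := ht.1
  have htT : t ≤ T := ht.2
  have hmap : MapsTo (fun s : ℝ => ((t, s) : ℝ × ℝ)) (Icc 0 t)
      {ts : ℝ × ℝ | 0 ≤ ts.2 ∧ ts.2 ≤ ts.1 ∧ ts.1 ≤ T} := fun s hs => ⟨hs.1, hs.2, htT⟩
  have hcont : ∀ {k : ℝ → ℝ → ℝ}, ContinuousOn (fun ts : ℝ × ℝ => k ts.1 ts.2)
      {ts : ℝ × ℝ | 0 ≤ ts.2 ∧ ts.2 ≤ ts.1 ∧ ts.1 ≤ T} →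
      ContinuousOn (fun s => k t s) (Icc 0 t) := by
    intro k hk
    have := hk.comp ((continuous_const.prodMk continuous_id).continuousOn) hmap
    exact this
  have hut : IntegrableOn u (Icc 0 t) := hu.mono_set (Icc_subset_Icc_right htT)
  have huI : IntervalIntegrable u volume 0 t :=
    (intervalIntegrable_iff_integrableOn_Icc_of_le ht0).mpr hut
  have hasub : ∀ (x y z : V), a (x - y) z = a x z - a y z := by
    intro x y z; rw [map_sub, ContinuousLinearMap.sub_apply]
  have hbsub : ∀ (x y : V) (q : Q), b (x - y) q = b x q - b y q := by
    intro x y q; rw [map_sub, ContinuousLinearMap.sub_apply]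
  set IU : ℝ := ∫ s in (0:ℝ)..t, ‖u s‖ with hIUdef
  have hIUnn : 0 ≤ IU := intervalIntegral.integral_nonneg ht0 fun s _ => norm_nonneg _
  have hb3 : ∀ s ∈ Icc (0:ℝ) t, |k₃ t s| ≤ Ck₃ := fun s hs => hk₃b t s hs.1 hs.2 htT
  have hb13 : ∀ s ∈ Icc (0:ℝ) t, |k₁ t s - k₃ t s| ≤ Ckt := fun s hs => hktb t s hs.1 hs.2 htT
  have hb1 : ∀ s ∈ Icc (0:ℝ) t, |k₁ t s| ≤ Ck₁ := fun s hs => hk₁b t s hs.1 hs.2 htT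
  have hI3 : IntervalIntegrable (fun s => k₃ t s • u s) volume 0 t :=
    kernel_smul_intervalIntegrable ht0 hut (hcont hk₃c) hb3
  set I : V := ∫ s in (0:ℝ)..t, k₃ t s • u s with hIdef
  set wt : V := u t - I with hwtdef
  have hBwt : ∀ q : Q, b wt q = g t q := by
    intro q
    have hcomm := (b.flip q).intervalIntegral_comp_comm hI3
    have hIq : b I q = ∫ s in (0:ℝ)..t, k₃ t s * b (u s) q := by
      have h2 := hcomm.symm
      rw [← hIdef] at h2
      simp only [ContinuousLinearMap.flip_apply, _root_.map_smul, ContinuousLinearMap.smul_apply,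
        smul_eq_mul] at h2
      exact h2
    have hsub : b wt q = b (u t) q - b I q := by
      rw [hwtdef]; exact hbsub _ _ _
    rw [hsub, hIq, eq2 q]; ring
  obtain ⟨wb, hwb, hwbn⟩ := surj_bound_aux b β hβ hinfsup (g t)
  set w₀ : V := wt - wb with hw₀def
  have hb0 : b w₀ = 0 := by
    ext q
    rw [hw₀def, hbsub, hBwt q, hwb]
    simp
  have e1 := eq1 w₀
  simp only [hb0, ContinuousLinearMap.zero_apply, mul_zero, add_zero] at e1
  have haw : IntegrableOn (fun s => a (u s) w₀) (Icc 0 t) :=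
    (a.flip w₀).integrable_comp hut
  have hint1 : IntervalIntegrable (fun s => k₁ t s * a (u s) w₀) volume 0 t := by
    have := kernel_smul_intervalIntegrable ht0 haw (hcont hk₁c) hb1
    simpa [smul_eq_mul] using this
  have hint3 : IntervalIntegrable (fun s => k₃ t s * a (u s) w₀) volume 0 t := by
    have := kernel_smul_intervalIntegrable ht0 haw (hcont hk₃c) hb3
    simpa [smul_eq_mul] using this
  have haI : a I w₀ = ∫ s in (0:ℝ)..t, k₃ t s * a (u s) w₀ := by
    have hcomm := (a.flip w₀).intervalIntegral_comp_comm hI3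
    have h2 := hcomm.symm
    rw [← hIdef] at h2
    simp only [ContinuousLinearMap.flip_apply, _root_.map_smul, ContinuousLinearMap.smul_apply,
      smul_eq_mul] at h2
    exact h2
  have keyD : a wt w₀ = f t w₀ + ∫ s in (0:ℝ)..t, (k₁ t s - k₃ t s) * a (u s) w₀ := by
    have h5 : a wt w₀ = a (u t) w₀ - a I w₀ := by
      rw [hwtdef]; exact hasub _ _ _
    rw [h5, e1, haI]
    simp_rw [sub_mul]
    rw [intervalIntegral.integral_sub hint1 hint3]
    ring
  have hIb : (∫ s in (0:ℝ)..t, (k₁ t s - k₃ t s) * a (u s) w₀) ≤ Ckt * ‖a‖ * ‖w₀‖ * IU := by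
    have hnb : ∀ᵐ s ∂(volume.restrict (Set.uIoc (0:ℝ) t)),
        ‖(k₁ t s - k₃ t s) * a (u s) w₀‖ ≤ Ckt * ‖a‖ * ‖w₀‖ * ‖u s‖ := by
      rw [uIoc_of_le ht0]
      filter_upwards [ae_restrict_mem measurableSet_Ioc] with s hs
      have hs' : s ∈ Icc (0:ℝ) t := ⟨hs.1.le, hs.2⟩
      rw [Real.norm_eq_abs, abs_mul]
      calc |k₁ t s - k₃ t s| * |a (u s) w₀| ≤ Ckt * (‖a‖ * ‖u s‖ * ‖w₀‖) := by
            apply mul_le_mul (hb13 s hs') ?_ (abs_nonneg _) hCkt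
            simpa [Real.norm_eq_abs] using a.le_opNorm₂ (u s) w₀
        _ = Ckt * ‖a‖ * ‖w₀‖ * ‖u s‖ := by ring
    have hgi : IntervalIntegrable (fun s => Ckt * ‖a‖ * ‖w₀‖ * ‖u s‖) volume 0 t :=
      huI.norm.const_mul _
    have hle := intervalIntegral.norm_integral_le_abs_of_norm_le hnb hgi
    rw [intervalIntegral.integral_const_mul] at hle
    have habs : |Ckt * ‖a‖ * ‖w₀‖ * IU| = Ckt * ‖a‖ * ‖w₀‖ * IU := abs_of_nonneg (by positivity)
    rw [hIUdef] at habs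
    calc (∫ s in (0:ℝ)..t, (k₁ t s - k₃ t s) * a (u s) w₀)
        ≤ ‖∫ s in (0:ℝ)..t, (k₁ t s - k₃ t s) * a (u s) w₀‖ := by
          rw [Real.norm_eq_abs]; exact le_abs_self _
      _ ≤ |Ckt * ‖a‖ * ‖w₀‖ * ∫ s in (0:ℝ)..t, ‖u s‖| := hle
      _ = Ckt * ‖a‖ * ‖w₀‖ * IU := by rw [habs, ← hIUdef]
  have hIn : ‖I‖ ≤ Ck₃ * IU := by
    have hnb : ∀ᵐ s ∂(volume.restrict (Set.uIoc (0:ℝ) t)),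
        ‖k₃ t s • u s‖ ≤ Ck₃ * ‖u s‖ := by
      rw [uIoc_of_le ht0]
      filter_upwards [ae_restrict_mem measurableSet_Ioc] with s hs
      have hs' : s ∈ Icc (0:ℝ) t := ⟨hs.1.le, hs.2⟩
      rw [norm_smul, Real.norm_eq_abs]
      exact mul_le_mul_of_nonneg_right (hb3 s hs') (norm_nonneg _)
    have hgi : IntervalIntegrable (fun s => Ck₃ * ‖u s‖) volume 0 t :=
      huI.norm.const_mul _
    have hle := intervalIntegral.norm_integral_le_abs_of_norm_le hnb hgi
    rw [intervalIntegral.integral_const_mul] at hle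
    have habs : |Ck₃ * ∫ s in (0:ℝ)..t, ‖u s‖| = Ck₃ * IU := by
      rw [← hIUdef]; exact abs_of_nonneg (by positivity)
    rw [hIdef]
    calc ‖∫ s in (0:ℝ)..t, k₃ t s • u s‖ ≤ |Ck₃ * ∫ s in (0:ℝ)..t, ‖u s‖| := hle
      _ = Ck₃ * IU := habs
  have haww : a w₀ w₀ = a wt w₀ - a wb w₀ := by
    rw [hw₀def]; exact hasub _ _ _
  have hfb : f t w₀ ≤ ‖f t‖ * ‖w₀‖ :=
    le_trans (le_abs_self _) (by simpa [Real.norm_eq_abs] using (f t).le_opNorm w₀)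
  have hab : -(a wb w₀) ≤ ‖a‖ * ‖wb‖ * ‖w₀‖ := by
    have h := abs_le.mp (by simpa [Real.norm_eq_abs] using a.le_opNorm₂ wb w₀)
    linarith [h.1]
  have hE2 : α₀ * ‖w₀‖ ^ 2 ≤ (‖f t‖ + Ckt * ‖a‖ * IU + ‖a‖ * ‖wb‖) * ‖w₀‖ := by
    have h := hcoer w₀ hb0
    rw [haww, keyD] at h
    nlinarith [hfb, hIb, hab]
  have hw0b : ‖w₀‖ ≤ (1 / α₀) * (‖f t‖ + Ckt * ‖a‖ * IU + ‖a‖ * ‖wb‖) := by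
    rcases eq_or_lt_of_le (norm_nonneg w₀) with h0 | h0
    · rw [← h0]
      have hnn : 0 ≤ ‖f t‖ + Ckt * ‖a‖ * IU + ‖a‖ * ‖wb‖ := by positivity
      positivity
    · have hlin : α₀ * ‖w₀‖ ≤ ‖f t‖ + Ckt * ‖a‖ * IU + ‖a‖ * ‖wb‖ := by
        refine le_of_mul_le_mul_right ?_ h0
        calc α₀ * ‖w₀‖ * ‖w₀‖ = α₀ * ‖w₀‖ ^ 2 := by ring
          _ ≤ _ := hE2
      calc ‖w₀‖ = (1 / α₀) * (α₀ * ‖w₀‖) := by field_simp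
        _ ≤ (1 / α₀) * (‖f t‖ + Ckt * ‖a‖ * IU + ‖a‖ * ‖wb‖) :=
            mul_le_mul_of_nonneg_left hlin (by positivity)
  have hsplit : ‖u t‖ ≤ ‖w₀‖ + ‖wb‖ + Ck₃ * IU := by
    have hudecomp : u t = w₀ + wb + I := by
      rw [hw₀def, hwtdef]; abel
    rw [hudecomp]
    calc ‖w₀ + wb + I‖ ≤ ‖w₀ + wb‖ + ‖I‖ := norm_add_le _ _
      _ ≤ ‖w₀‖ + ‖wb‖ + ‖I‖ := by linarith [norm_add_le w₀ wb]
      _ ≤ ‖w₀‖ + ‖wb‖ + Ck₃ * IU := by linarith [hIn]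
  calc ‖u t‖ ≤ ‖w₀‖ + ‖wb‖ + Ck₃ * IU := hsplit
    _ ≤ (1 / α₀) * (‖f t‖ + Ckt * ‖a‖ * IU + ‖a‖ * ‖wb‖) + ‖wb‖ + Ck₃ * IU := by
        linarith [hw0b]
    _ = (1 / α₀) * ‖f t‖ + ((‖a‖ / α₀) * Ckt) * IU + (1 + ‖a‖ / α₀) * ‖wb‖ + Ck₃ * IU := by
        field_simp
        ring
    _ ≤ (1 / α₀) * ‖f t‖ + ((‖a‖ / α₀) * Ckt) * IU + (1 + ‖a‖ / α₀) * ((1 / β) * ‖g t‖)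
          + Ck₃ * IU := by
        have h1A : (0:ℝ) ≤ 1 + ‖a‖ / α₀ := by positivity
        have := mul_le_mul_of_nonneg_left hwbn h1A
        linarith
    _ = (1 / α₀) * ‖f t‖ + (1 / β) * (1 + ‖a‖ / α₀) * ‖g t‖
          + ((‖a‖ / α₀) * Ckt + Ck₃) * IU := by ring
end
end

section
/- Let (u,p) be a solution of the mixed Volterra problem and define G₂(t) := ‖f(t)‖_{𝒱'} + ‖a‖‖u(t)‖_𝒱 + C_{k₁}‖a‖‖u‖_{L¹(J;𝒱)}. Then for a.e. t ∈ J, ‖B*p(t)‖_{𝒱'} ≤ G₂(t) + C_{k₂}e^{TC_{k₂}} ∫₀ᵗ G₂(s) ds. -/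
open MeasureTheory Real Set
open scoped ENNReal

noncomputable section

variable {V Q : Type*}
  [NormedAddCommGroup V] [InnerProductSpace ℝ V] [CompleteSpace V]
  [NormedAddCommGroup Q] [InnerProductSpace ℝ Q] [CompleteSpace Q]

lemma gronwall_primitive' (T C : ℝ) (hC : 0 ≤ C) (φ G : ℝ → ℝ)
    (hφ : Integrable φ) (hG : Integrable G)
    (hφ0 : ∀ t, 0 ≤ φ t) (hG0 : ∀ t, 0 ≤ G t)
    (h : ∀ᵐ t ∂(volume.restrict (Icc (0:ℝ) T)), φ t ≤ G t + C * ∫ s in (0:ℝ)..t, φ s) :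
    ∀ t ∈ Icc (0:ℝ) T, (∫ s in (0:ℝ)..t, φ s) ≤ exp (C * t) * ∫ s in (0:ℝ)..t, G s := by
  set Ψ : ℝ → ℝ := fun t => ∫ s in (0:ℝ)..t, φ s with hΨdef
  set H : ℝ → ℝ := fun t => ∫ s in (0:ℝ)..t, G s with hHdef
  have hΨc : Continuous Ψ := hφ.continuous_primitive 0
  have hΨ0 : ∀ t, 0 ≤ t → 0 ≤ Ψ t := fun t ht =>
    intervalIntegral.integral_nonneg ht fun s _ => hφ0 s
  have hH0 : ∀ t, 0 ≤ t → 0 ≤ H t := fun t ht =>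
    intervalIntegral.integral_nonneg ht fun s _ => hG0 s
  have hHmono : ∀ x y : ℝ, x ≤ y → H x ≤ H y := by
    intro x y hxy
    have h1 : H x + ∫ s in x..y, G s = H y :=
      intervalIntegral.integral_add_adjacent_intervals hG.intervalIntegrable
        hG.intervalIntegrable
    nlinarith [intervalIntegral.integral_nonneg (μ := volume) hxy (fun s _ => hG0 s)]
  -- key integral inequality
  have key : ∀ t ∈ Icc (0:ℝ) T, Ψ t ≤ H t + C * ∫ s in (0:ℝ)..t, Ψ s := by
    intro t ht
    have h' : φ ≤ᵐ[volume.restrict (Icc (0:ℝ) t)] fun s => G s + C * Ψ s :=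
      h.filter_mono (ae_mono (Measure.restrict_mono (Icc_subset_Icc le_rfl ht.2) le_rfl))
    have hint : IntervalIntegrable (fun s => G s + C * Ψ s) volume 0 t :=
      hG.intervalIntegrable.add ((continuous_const.mul hΨc).intervalIntegrable 0 t)
    have hmono := intervalIntegral.integral_mono_ae_restrict ht.1 hφ.intervalIntegrable hint h'
    calc Ψ t ≤ ∫ s in (0:ℝ)..t, (G s + C * Ψ s) := hmono
      _ = H t + C * ∫ s in (0:ℝ)..t, Ψ s := by
          rw [intervalIntegral.integral_add (f := G) (g := fun s => C * Ψ s) hG.intervalIntegrable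
            ((continuous_const.mul hΨc).intervalIntegrable 0 t),
            intervalIntegral.integral_const_mul]
  intro t₀ ht₀
  set F : ℝ → ℝ := fun t => ∫ s in (0:ℝ)..t, Ψ s with hFdef
  have hFc : Continuous F :=
    intervalIntegral.continuous_primitive (fun a b => hΨc.intervalIntegrable a b) 0
  have hF' : ∀ x ∈ Ico (0:ℝ) t₀, HasDerivWithinAt F (Ψ x) (Ici x) x := fun x _ =>
    ((hΨc.integral_hasStrictDerivAt 0 x).hasDerivAt).hasDerivWithinAt
  have hF0 : ∀ x, 0 ≤ x → 0 ≤ F x := fun x hx =>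
    intervalIntegral.integral_nonneg hx fun s hs => hΨ0 s hs.1
  have bound : ∀ x ∈ Ico (0:ℝ) t₀, ‖Ψ x‖ ≤ C * ‖F x‖ + H t₀ := by
    intro x hx
    rw [Real.norm_eq_abs, Real.norm_eq_abs, abs_of_nonneg (hΨ0 x hx.1),
      abs_of_nonneg (hF0 x hx.1)]
    have h1 := key x ⟨hx.1, hx.2.le.trans ht₀.2⟩
    have h2 := hHmono x t₀ hx.2.le
    linarith
  have hgb := norm_le_gronwallBound_of_norm_deriv_right_le
    (f := F) (f' := Ψ) (δ := 0) (K := C) (ε := H t₀) (a := 0) (b := t₀)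
    hFc.continuousOn hF' (by simp [hFdef]) bound t₀ ⟨ht₀.1, le_rfl⟩
  have hFt₀ : F t₀ ≤ gronwallBound 0 C (H t₀) (t₀ - 0) :=
    le_trans (le_abs_self _) hgb
  have hfin : H t₀ + C * gronwallBound 0 C (H t₀) (t₀ - 0) ≤ exp (C * t₀) * H t₀ := by
    rcases eq_or_ne C 0 with hC0 | hC0
    · simp [hC0]
    · rw [gronwallBound_of_K_ne_0 hC0]
      simp only [sub_zero, zero_mul, zero_add]
      have e1 : C * (H t₀ / C * (rexp (C * t₀) - 1)) = H t₀ * rexp (C * t₀) - H t₀ := by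
        field_simp
      linarith
  have := key t₀ ht₀
  have : Ψ t₀ ≤ H t₀ + C * F t₀ := this
  nlinarith [hFt₀, mul_le_mul_of_nonneg_left hFt₀ hC]

theorem mixed_volterra_Bstar_p_bound
    (T : ℝ) (hT : 0 ≤ T)
    (a : V →L[ℝ] V →L[ℝ] ℝ) (b : V →L[ℝ] Q →L[ℝ] ℝ)
    (hsym : ∀ v w : V, a v w = a w v)
    (k₁ k₂ k₃ : ℝ → ℝ → ℝ)
    (hk₁c : ContinuousOn (fun ts : ℝ × ℝ => k₁ ts.1 ts.2)
      {ts : ℝ × ℝ | 0 ≤ ts.2 ∧ ts.2 ≤ ts.1 ∧ ts.1 ≤ T})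
    (hk₂c : ContinuousOn (fun ts : ℝ × ℝ => k₂ ts.1 ts.2)
      {ts : ℝ × ℝ | 0 ≤ ts.2 ∧ ts.2 ≤ ts.1 ∧ ts.1 ≤ T})
    (hk₃c : ContinuousOn (fun ts : ℝ × ℝ => k₃ ts.1 ts.2)
      {ts : ℝ × ℝ | 0 ≤ ts.2 ∧ ts.2 ≤ ts.1 ∧ ts.1 ≤ T})
    (Ck₁ Ck₂ Ck₃ : ℝ) (hCk₁ : 0 ≤ Ck₁) (hCk₂ : 0 ≤ Ck₂) (hCk₃ : 0 ≤ Ck₃)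
    (hk₁b : ∀ t s : ℝ, 0 ≤ s → s ≤ t → t ≤ T → |k₁ t s| ≤ Ck₁)
    (hk₂b : ∀ t s : ℝ, 0 ≤ s → s ≤ t → t ≤ T → |k₂ t s| ≤ Ck₂)
    (hk₃b : ∀ t s : ℝ, 0 ≤ s → s ≤ t → t ≤ T → |k₃ t s| ≤ Ck₃)
    (f : ℝ → V →L[ℝ] ℝ) (g : ℝ → Q →L[ℝ] ℝ)
    (hf : IntegrableOn f (Icc 0 T)) (hg : IntegrableOn g (Icc 0 T))
    (u : ℝ → V) (p : ℝ → Q)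
    (hu : IntegrableOn u (Icc 0 T)) (hp : IntegrableOn p (Icc 0 T))
    (hsol : MixedVolterraSol T a b k₁ k₂ k₃ f g u p)
    (G₂ : ℝ → ℝ)
    (hG₂ : ∀ t : ℝ, G₂ t = ‖f t‖ + ‖a‖ * ‖u t‖
        + Ck₁ * ‖a‖ * ∫ s in Icc (0:ℝ) T, ‖u s‖) :
    ∀ᵐ t ∂(volume.restrict (Icc (0:ℝ) T)),
      ‖b.flip (p t)‖ ≤ G₂ t + Ck₂ * exp (T * Ck₂) * ∫ s in (0:ℝ)..t, G₂ s := by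
  classical
  set φ : ℝ → ℝ := fun t => ‖b.flip (p t)‖ with hφdef
  have hIU0 : 0 ≤ ∫ s in Icc (0:ℝ) T, ‖u s‖ := integral_nonneg fun s => norm_nonneg _
  have hG₂0 : ∀ t, 0 ≤ G₂ t := by
    intro t; rw [hG₂ t]
    have := norm_nonneg (f t); have := norm_nonneg (u t); have := norm_nonneg a
    positivity
  have hφ0 : ∀ t, 0 ≤ φ t := fun t => norm_nonneg _
  have hφ_int : IntegrableOn φ (Icc (0:ℝ) T) :=
    (ContinuousLinearMap.integrable_comp b.flip hp).norm
  have hG₂_int : IntegrableOn G₂ (Icc (0:ℝ) T) := by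
    have h1 : IntegrableOn (fun t => ‖f t‖ + ‖a‖ * ‖u t‖
        + Ck₁ * ‖a‖ * ∫ s in Icc (0:ℝ) T, ‖u s‖) (Icc (0:ℝ) T) :=
      (hf.norm.add (hu.norm.const_mul _)).add (integrableOn_const measure_Icc_lt_top.ne)
    exact h1.congr_fun (fun t _ => (hG₂ t).symm) measurableSet_Icc
  have huN_int : IntegrableOn (fun s => ‖u s‖) (Icc (0:ℝ) T) := hu.norm
  -- pointwise a.e. bound
  have hmem := ae_restrict_mem (μ := volume) (measurableSet_Icc : MeasurableSet (Icc (0:ℝ) T))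
  have hkey : ∀ᵐ t ∂(volume.restrict (Icc (0:ℝ) T)),
      φ t ≤ G₂ t + Ck₂ * ∫ s in (0:ℝ)..t, φ s := by
    filter_upwards [hsol, hmem] with t hsolt htI
    have ht0 : (0:ℝ) ≤ t := htI.1
    have htT : t ≤ T := htI.2
    -- integrability of component pieces on Ioc 0 t
    have hsub : Ioc (0:ℝ) t ⊆ Icc (0:ℝ) T := fun s hs => ⟨hs.1.le, hs.2.trans htT⟩
    have huN_t : IntegrableOn (fun s => ‖u s‖) (Ioc (0:ℝ) t) := huN_int.mono_set hsub
    have hφ_t : IntegrableOn φ (Ioc (0:ℝ) t) := hφ_int.mono_set hsub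
    -- bound each functional value
    have hIu_le : (∫ s in (0:ℝ)..t, ‖u s‖) ≤ ∫ s in Icc (0:ℝ) T, ‖u s‖ := by
      rw [intervalIntegral.integral_of_le ht0]
      exact setIntegral_mono_set huN_int
        (Filter.Eventually.of_forall fun s => norm_nonneg _) hsub.eventuallyLE
    have hφI0 : 0 ≤ ∫ s in (0:ℝ)..t, φ s :=
      intervalIntegral.integral_nonneg ht0 fun s _ => hφ0 s
    have hM0 : 0 ≤ G₂ t + Ck₂ * ∫ s in (0:ℝ)..t, φ s := by
      have := hG₂0 t; positivity
    refine ContinuousLinearMap.opNorm_le_bound _ hM0 fun v => ?_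
    have heq := hsolt.1 v
    have hbv : b v (p t) = f t v
        + (∫ s in (0:ℝ)..t, (k₁ t s * a (u s) v + k₂ t s * b v (p s))) - a (u t) v := by
      linarith [heq]
    -- bound the integral term
    set gbd : ℝ → ℝ := fun s => Ck₁ * ‖a‖ * ‖v‖ * ‖u s‖ + Ck₂ * ‖v‖ * φ s with hgbd
    have hgbd_int : IntervalIntegrable gbd volume 0 t := by
      rw [intervalIntegrable_iff_integrableOn_Ioc_of_le ht0]
      exact (huN_t.const_mul _).add (hφ_t.const_mul _)
    have hbnd : ∀ᵐ s ∂(volume.restrict (Set.uIoc (0:ℝ) t)),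
        ‖k₁ t s * a (u s) v + k₂ t s * b v (p s)‖ ≤ gbd s := by
      rw [uIoc_of_le ht0]
      filter_upwards [ae_restrict_mem measurableSet_Ioc] with s hs
      have h1 : |k₁ t s| ≤ Ck₁ := hk₁b t s hs.1.le hs.2 htT
      have h2 : |k₂ t s| ≤ Ck₂ := hk₂b t s hs.1.le hs.2 htT
      have ha1 : |a (u s) v| ≤ ‖a‖ * ‖u s‖ * ‖v‖ := by
        calc |a (u s) v| ≤ ‖a (u s)‖ * ‖v‖ := (a (u s)).le_opNorm v
          _ ≤ ‖a‖ * ‖u s‖ * ‖v‖ :=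
            mul_le_mul_of_nonneg_right (a.le_opNorm (u s)) (norm_nonneg v)
      have hb1 : |b v (p s)| ≤ φ s * ‖v‖ := by
        have : b v (p s) = b.flip (p s) v := rfl
        rw [this]
        exact (b.flip (p s)).le_opNorm v
      calc ‖k₁ t s * a (u s) v + k₂ t s * b v (p s)‖
          ≤ |k₁ t s * a (u s) v| + |k₂ t s * b v (p s)| := norm_add_le _ _
        _ = |k₁ t s| * |a (u s) v| + |k₂ t s| * |b v (p s)| := by rw [abs_mul, abs_mul]
        _ ≤ Ck₁ * (‖a‖ * ‖u s‖ * ‖v‖) + Ck₂ * (φ s * ‖v‖) := by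
            have m1 := mul_le_mul h1 ha1 (abs_nonneg _) hCk₁
            have m2 := mul_le_mul h2 hb1 (abs_nonneg _) hCk₂
            linarith
        _ = gbd s := by rw [hgbd]; ring
    have hInt_le : ‖∫ s in (0:ℝ)..t, (k₁ t s * a (u s) v + k₂ t s * b v (p s))‖
        ≤ Ck₁ * ‖a‖ * ‖v‖ * (∫ s in (0:ℝ)..t, ‖u s‖) + Ck₂ * ‖v‖ * ∫ s in (0:ℝ)..t, φ s := by
      refine (intervalIntegral.norm_integral_le_abs_of_norm_le hbnd hgbd_int).trans ?_
      have hgbd0 : 0 ≤ ∫ s in (0:ℝ)..t, gbd s := by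
        refine intervalIntegral.integral_nonneg ht0 fun s _ => ?_
        have := norm_nonneg (u s); have := hφ0 s; have := norm_nonneg v
        have := norm_nonneg a
        rw [hgbd]; positivity
      rw [abs_of_nonneg hgbd0]
      have : (∫ s in (0:ℝ)..t, gbd s)
          = Ck₁ * ‖a‖ * ‖v‖ * (∫ s in (0:ℝ)..t, ‖u s‖)
            + Ck₂ * ‖v‖ * ∫ s in (0:ℝ)..t, φ s := by
        rw [hgbd, intervalIntegral.integral_add
          (by rw [intervalIntegrable_iff_integrableOn_Ioc_of_le ht0]
              exact huN_t.const_mul _)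
          (by rw [intervalIntegrable_iff_integrableOn_Ioc_of_le ht0]
              exact hφ_t.const_mul _),
          intervalIntegral.integral_const_mul, intervalIntegral.integral_const_mul]
      rw [this]
    have hfv : |f t v| ≤ ‖f t‖ * ‖v‖ := (f t).le_opNorm v
    have hav : |a (u t) v| ≤ ‖a‖ * ‖u t‖ * ‖v‖ := by
      calc |a (u t) v| ≤ ‖a (u t)‖ * ‖v‖ := (a (u t)).le_opNorm v
        _ ≤ ‖a‖ * ‖u t‖ * ‖v‖ :=
          mul_le_mul_of_nonneg_right (a.le_opNorm (u t)) (norm_nonneg v)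
    have hflip : b.flip (p t) v = b v (p t) := rfl
    rw [hflip, hbv, hG₂ t]
    have habs : |f t v + (∫ s in (0:ℝ)..t, (k₁ t s * a (u s) v + k₂ t s * b v (p s)))
        - a (u t) v| ≤ |f t v| + ‖∫ s in (0:ℝ)..t, (k₁ t s * a (u s) v + k₂ t s * b v (p s))‖
        + |a (u t) v| := by
      calc _ ≤ |f t v + (∫ s in (0:ℝ)..t, (k₁ t s * a (u s) v + k₂ t s * b v (p s)))|
            + |a (u t) v| := abs_sub _ _
        _ ≤ _ := by
            have := abs_add_le (f t v) (∫ s in (0:ℝ)..t, (k₁ t s * a (u s) v + k₂ t s * b v (p s)))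
            rw [Real.norm_eq_abs]; linarith
    refine habs.trans ?_
    have hmul : Ck₁ * ‖a‖ * ‖v‖ * (∫ s in (0:ℝ)..t, ‖u s‖)
        ≤ Ck₁ * ‖a‖ * ‖v‖ * ∫ s in Icc (0:ℝ) T, ‖u s‖ := by
      have h0 : 0 ≤ Ck₁ * ‖a‖ * ‖v‖ := by positivity
      exact mul_le_mul_of_nonneg_left hIu_le h0
    nlinarith [hInt_le, norm_nonneg v]
  -- indicator functions for Grönwall
  set φ' : ℝ → ℝ := (Icc (0:ℝ) T).indicator φ with hφ'def
  set G' : ℝ → ℝ := (Icc (0:ℝ) T).indicator G₂ with hG'def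
  have hφ'int : Integrable φ' := hφ_int.integrable_indicator measurableSet_Icc
  have hG'int : Integrable G' := hG₂_int.integrable_indicator measurableSet_Icc
  have hφ'0 : ∀ t, 0 ≤ φ' t := fun t => Set.indicator_nonneg (fun s _ => hφ0 s) t
  have hG'0 : ∀ t, 0 ≤ G' t := fun t => Set.indicator_nonneg (fun s _ => hG₂0 s) t
  have hind : ∀ (h : ℝ → ℝ), ∀ t ∈ Icc (0:ℝ) T,
      (∫ s in (0:ℝ)..t, (Icc (0:ℝ) T).indicator h s) = ∫ s in (0:ℝ)..t, h s := by
    intro h t ht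
    refine intervalIntegral.integral_congr fun s hs => ?_
    rw [uIcc_of_le ht.1] at hs
    have hs' : s ∈ Icc (0:ℝ) T := ⟨hs.1, hs.2.trans ht.2⟩
    exact Set.indicator_of_mem hs' h
  have hae' : ∀ᵐ t ∂(volume.restrict (Icc (0:ℝ) T)),
      φ' t ≤ G' t + Ck₂ * ∫ s in (0:ℝ)..t, φ' s := by
    filter_upwards [hkey, hmem] with t ht htI
    rw [hφ'def, hG'def, Set.indicator_of_mem htI, Set.indicator_of_mem htI,
      hind φ t htI]
    exact ht
  have hgron := gronwall_primitive' T Ck₂ hCk₂ φ' G' hφ'int hG'int hφ'0 hG'0 hae'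
  filter_upwards [hkey, hmem] with t ht htI
  have h1 : (∫ s in (0:ℝ)..t, φ s) = ∫ s in (0:ℝ)..t, φ' s := (hind φ t htI).symm
  have h2 : (∫ s in (0:ℝ)..t, G' s) = ∫ s in (0:ℝ)..t, G₂ s := hind G₂ t htI
  have h3 := hgron t htI
  rw [h2] at h3
  have hexp : exp (Ck₂ * t) ≤ exp (T * Ck₂) := by
    apply Real.exp_le_exp.2
    rw [mul_comm T Ck₂]
    exact mul_le_mul_of_nonneg_left htI.2 hCk₂
  have hG₂I0 : 0 ≤ ∫ s in (0:ℝ)..t, G₂ s :=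
    intervalIntegral.integral_nonneg htI.1 fun s _ => hG₂0 s
  calc φ t ≤ G₂ t + Ck₂ * ∫ s in (0:ℝ)..t, φ s := ht
    _ = G₂ t + Ck₂ * ∫ s in (0:ℝ)..t, φ' s := by rw [h1]
    _ ≤ G₂ t + Ck₂ * (exp (Ck₂ * t) * ∫ s in (0:ℝ)..t, G₂ s) := by
        exact add_le_add_right (mul_le_mul_of_nonneg_left h3 hCk₂) _
    _ ≤ G₂ t + Ck₂ * exp (T * Ck₂) * ∫ s in (0:ℝ)..t, G₂ s := by
        rw [mul_assoc]
        refine add_le_add_right (mul_le_mul_of_nonneg_left ?_ hCk₂) _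
        exact mul_le_mul_of_nonneg_right hexp hG₂I0
end
end

section
/- Let (u,p) be a solution of the mixed Volterra problem, let u_g ∈ L¹(J;𝒱) be a lifting of g (B u_g(t) = g(t) and β‖u_g(t)‖_𝒱 ≤ ‖g(t)‖_{𝒬'} a.e.), and set u_K(t) := u(t) − u_g(t) − ∫₀ᵗ k₃(t,s) u(s) ds. Then for a.e. t ∈ J, α₀‖u_K(t)‖_𝒱 ≤ ‖f(t)‖_{𝒱'} + (‖a‖/β)‖g(t)‖_{𝒬'} + C_{k̃}‖a‖ ∫₀ᵗ ‖u(s)‖_𝒱 ds. -/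
open MeasureTheory Real Set
open scoped ENNReal

noncomputable section

variable {V Q : Type*}
  [NormedAddCommGroup V] [InnerProductSpace ℝ V] [CompleteSpace V]
  [NormedAddCommGroup Q] [InnerProductSpace ℝ Q] [CompleteSpace Q]

set_option maxHeartbeats 2000000

theorem mixed_volterra_uK_bound
    (T : ℝ) (hT : 0 ≤ T)
    (a : V →L[ℝ] V →L[ℝ] ℝ) (b : V →L[ℝ] Q →L[ℝ] ℝ)
    (hsym : ∀ v w : V, a v w = a w v)
    (α₀ : ℝ) (hα₀ : 0 < α₀)
    (hcoer : ∀ v : V, b v = 0 → α₀ * ‖v‖ ^ 2 ≤ a v v)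
    (β : ℝ) (hβ : 0 < β)
    (hinfsup : ∀ q : Q, β * ‖q‖ ≤ ‖b.flip q‖)
    (k₁ k₂ k₃ : ℝ → ℝ → ℝ)
    (hk₁c : ContinuousOn (fun ts : ℝ × ℝ => k₁ ts.1 ts.2)
      {ts : ℝ × ℝ | 0 ≤ ts.2 ∧ ts.2 ≤ ts.1 ∧ ts.1 ≤ T})
    (hk₂c : ContinuousOn (fun ts : ℝ × ℝ => k₂ ts.1 ts.2)
      {ts : ℝ × ℝ | 0 ≤ ts.2 ∧ ts.2 ≤ ts.1 ∧ ts.1 ≤ T})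
    (hk₃c : ContinuousOn (fun ts : ℝ × ℝ => k₃ ts.1 ts.2)
      {ts : ℝ × ℝ | 0 ≤ ts.2 ∧ ts.2 ≤ ts.1 ∧ ts.1 ≤ T})
    (Ck₁ Ck₂ Ck₃ : ℝ) (hCk₁ : 0 ≤ Ck₁) (hCk₂ : 0 ≤ Ck₂) (hCk₃ : 0 ≤ Ck₃)
    (hk₁b : ∀ t s : ℝ, 0 ≤ s → s ≤ t → t ≤ T → |k₁ t s| ≤ Ck₁)
    (hk₂b : ∀ t s : ℝ, 0 ≤ s → s ≤ t → t ≤ T → |k₂ t s| ≤ Ck₂)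
    (hk₃b : ∀ t s : ℝ, 0 ≤ s → s ≤ t → t ≤ T → |k₃ t s| ≤ Ck₃)
    (Ckt : ℝ) (hCkt : 0 ≤ Ckt)
    (hktb : ∀ t s : ℝ, 0 ≤ s → s ≤ t → t ≤ T → |k₁ t s - k₃ t s| ≤ Ckt)
    (f : ℝ → V →L[ℝ] ℝ) (g : ℝ → Q →L[ℝ] ℝ)
    (hf : IntegrableOn f (Icc 0 T)) (hg : IntegrableOn g (Icc 0 T))
    (u : ℝ → V) (p : ℝ → Q)
    (hu : IntegrableOn u (Icc 0 T)) (hp : IntegrableOn p (Icc 0 T))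
    (hsol : MixedVolterraSol T a b k₁ k₂ k₃ f g u p)
    (ug : ℝ → V) (hug : IntegrableOn ug (Icc 0 T))
    (hugB : ∀ᵐ t ∂(volume.restrict (Icc (0:ℝ) T)), b (ug t) = g t)
    (hugb : ∀ᵐ t ∂(volume.restrict (Icc (0:ℝ) T)), β * ‖ug t‖ ≤ ‖g t‖)
    (uK : ℝ → V)
    (huK : ∀ t : ℝ, uK t = u t - ug t - ∫ s in (0:ℝ)..t, k₃ t s • u s) :
    ∀ᵐ t ∂(volume.restrict (Icc (0:ℝ) T)),
      α₀ * ‖uK t‖ ≤ ‖f t‖ + (‖a‖ / β) * ‖g t‖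
        + Ckt * ‖a‖ * ∫ s in (0:ℝ)..t, ‖u s‖ := by
  filter_upwards [hsol, hugB, hugb, ae_restrict_mem measurableSet_Icc]
    with t heq hBug hub hti
  obtain ⟨ht0, htT⟩ := hti
  obtain ⟨eq1, eq2⟩ := heq
  have hut : IntegrableOn u (Icc 0 t) volume := hu.mono_set (Icc_subset_Icc le_rfl htT)
  have hcompact : IsCompact (Icc (0:ℝ) t) := isCompact_Icc
  have hkc : ∀ k : ℝ → ℝ → ℝ, ContinuousOn (fun ts : ℝ × ℝ => k ts.1 ts.2)
      {ts : ℝ × ℝ | 0 ≤ ts.2 ∧ ts.2 ≤ ts.1 ∧ ts.1 ≤ T} →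
      ContinuousOn (fun s => k t s) (Icc 0 t) := by
    intro k hk
    have hmap : MapsTo (fun s : ℝ => ((t, s) : ℝ × ℝ)) (Icc 0 t)
        {ts : ℝ × ℝ | 0 ≤ ts.2 ∧ ts.2 ≤ ts.1 ∧ ts.1 ≤ T} :=
      fun s hs => ⟨hs.1, hs.2, htT⟩
    exact hk.comp ((Continuous.prodMk_right t).continuousOn) hmap
  have hk1 := hkc k₁ hk₁c
  have hk3 := hkc k₃ hk₃c
  have hI3' : IntegrableOn (fun s => k₃ t s • u s) (Icc 0 t) volume :=
    hut.continuousOn_smul hk3 hcompact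
  have hI3 : IntervalIntegrable (fun s => k₃ t s • u s) volume 0 t := by
    rw [← uIcc_of_le ht0] at hI3'
    exact hI3'.intervalIntegrable
  have huKt : uK t = u t - ug t - ∫ s in (0:ℝ)..t, k₃ t s • u s := huK t
  -- b (uK t) = 0
  have hbK : b (uK t) = 0 := by
    ext q
    have h := (b.flip q).intervalIntegral_comp_comm hI3
    have h2 : ∀ s : ℝ, (b.flip q) (k₃ t s • u s) = k₃ t s * b (u s) q := by
      intro s
      rw [(b.flip q).map_smul]
      simp [smul_eq_mul]
    have hbI : b (∫ s in (0:ℝ)..t, k₃ t s • u s) q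
        = ∫ s in (0:ℝ)..t, k₃ t s * b (u s) q := by
      have hbI1 : b (∫ s in (0:ℝ)..t, k₃ t s • u s) q
          = ∫ s in (0:ℝ)..t, (b.flip q) (k₃ t s • u s) := h.symm
      rw [hbI1]
      exact intervalIntegral.integral_congr fun s _ => h2 s
    rw [huKt]
    simp only [map_sub, ContinuousLinearMap.sub_apply, hBug, hbI,
      ContinuousLinearMap.zero_apply]
    rw [eq2 q]; ring
  -- scalar integrands
  have haint : IntegrableOn (fun s => a (u s) (uK t)) (Icc 0 t) volume :=
    (a.flip (uK t)).integrable_comp hut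
  have h1' : IntegrableOn (fun s => k₁ t s * a (u s) (uK t)) (Icc 0 t) volume :=
    haint.continuousOn_mul hk1 hcompact
  have h3' : IntegrableOn (fun s => k₃ t s * a (u s) (uK t)) (Icc 0 t) volume :=
    haint.continuousOn_mul hk3 hcompact
  have h1 : IntervalIntegrable (fun s => k₁ t s * a (u s) (uK t)) volume 0 t := by
    rw [← uIcc_of_le ht0] at h1'; exact h1'.intervalIntegrable
  have h3 : IntervalIntegrable (fun s => k₃ t s * a (u s) (uK t)) volume 0 t := by
    rw [← uIcc_of_le ht0] at h3'; exact h3'.intervalIntegrable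
  have hdiff : IntervalIntegrable (fun s => (k₁ t s - k₃ t s) * a (u s) (uK t)) volume 0 t := by
    refine (h1.sub h3).congr (fun s _ => ?_)
    show k₁ t s * a (u s) (uK t) - k₃ t s * a (u s) (uK t) = _; ring
  -- a (∫ k₃ u) (uK t) = ∫ k₃ a(u s) (uK t)
  have haI : a (∫ s in (0:ℝ)..t, k₃ t s • u s) (uK t)
      = ∫ s in (0:ℝ)..t, k₃ t s * a (u s) (uK t) := by
    have h := (a.flip (uK t)).intervalIntegral_comp_comm hI3
    have h2 : ∀ s : ℝ, (a.flip (uK t)) (k₃ t s • u s) = k₃ t s * a (u s) (uK t) := by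
      intro s
      rw [(a.flip (uK t)).map_smul]
      simp [smul_eq_mul]
    have hbI1 : a (∫ s in (0:ℝ)..t, k₃ t s • u s) (uK t)
        = ∫ s in (0:ℝ)..t, (a.flip (uK t)) (k₃ t s • u s) := h.symm
    rw [hbI1]
    exact intervalIntegral.integral_congr fun s _ => h2 s
  have hbv : ∀ q : Q, b (uK t) q = 0 := by
    intro q; rw [hbK]; rfl
  have eqa : a (u t) (uK t) = f t (uK t) + ∫ s in (0:ℝ)..t, k₁ t s * a (u s) (uK t) := by
    have he := eq1 (uK t)
    simp only [hbv, mul_zero, add_zero] at he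
    linarith [he]
  have hvav : ∀ w : V, a (uK t) w = a (u t) w - a (ug t) w
      - a (∫ s in (0:ℝ)..t, k₃ t s • u s) w := by
    intro w; rw [huKt]
    simp [map_sub, ContinuousLinearMap.sub_apply]
  have hsplit : (∫ s in (0:ℝ)..t, (k₁ t s - k₃ t s) * a (u s) (uK t))
      = (∫ s in (0:ℝ)..t, k₁ t s * a (u s) (uK t))
        - ∫ s in (0:ℝ)..t, k₃ t s * a (u s) (uK t) := by
    rw [← intervalIntegral.integral_sub h1 h3]
    exact intervalIntegral.integral_congr fun s _ => by ring
  have hkey : a (uK t) (uK t) = f t (uK t) - a (ug t) (uK t)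
      + ∫ s in (0:ℝ)..t, (k₁ t s - k₃ t s) * a (u s) (uK t) := by
    rw [hvav (uK t), eqa, haI, hsplit]; ring
  -- bounds
  have hN : (0:ℝ) ≤ ‖uK t‖ := norm_nonneg _
  have hb1 : f t (uK t) ≤ ‖f t‖ * ‖uK t‖ := by
    have h : |f t (uK t)| ≤ ‖f t‖ * ‖uK t‖ := by
      rw [← Real.norm_eq_abs]; exact (f t).le_opNorm (uK t)
    linarith [le_abs_self (f t (uK t))]
  have hb2 : -(a (ug t) (uK t)) ≤ ‖a‖ * ‖ug t‖ * ‖uK t‖ := by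
    have h : |a (ug t) (uK t)| ≤ ‖a (ug t)‖ * ‖uK t‖ := by
      rw [← Real.norm_eq_abs]; exact (a (ug t)).le_opNorm (uK t)
    have h2 : ‖a (ug t)‖ * ‖uK t‖ ≤ ‖a‖ * ‖ug t‖ * ‖uK t‖ :=
      mul_le_mul_of_nonneg_right (a.le_opNorm (ug t)) hN
    linarith [neg_abs_le (a (ug t) (uK t))]
  have hut2 : IntegrableOn u (uIcc 0 t) volume := by
    rw [uIcc_of_le ht0]; exact hut
  have hunorm : IntervalIntegrable (fun s => ‖u s‖) volume 0 t :=
    hut2.intervalIntegrable.norm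
  have hb3 : (∫ s in (0:ℝ)..t, (k₁ t s - k₃ t s) * a (u s) (uK t))
      ≤ Ckt * ‖a‖ * (∫ s in (0:ℝ)..t, ‖u s‖) * ‖uK t‖ := by
    have habs : (∫ s in (0:ℝ)..t, (k₁ t s - k₃ t s) * a (u s) (uK t))
        ≤ ∫ s in (0:ℝ)..t, |(k₁ t s - k₃ t s) * a (u s) (uK t)| :=
      le_trans (le_abs_self _) (intervalIntegral.abs_integral_le_integral_abs ht0)
    have hmono : (∫ s in (0:ℝ)..t, |(k₁ t s - k₃ t s) * a (u s) (uK t)|)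
        ≤ ∫ s in (0:ℝ)..t, Ckt * ‖a‖ * ‖uK t‖ * ‖u s‖ := by
      refine intervalIntegral.integral_mono_on ht0 hdiff.abs (hunorm.const_mul _) ?_
      intro s hs
      have hk := hktb t s hs.1 hs.2 htT
      have ha1 : |a (u s) (uK t)| ≤ ‖a (u s)‖ * ‖uK t‖ := by
        rw [← Real.norm_eq_abs]; exact (a (u s)).le_opNorm (uK t)
      have ha2 : ‖a (u s)‖ * ‖uK t‖ ≤ ‖a‖ * ‖u s‖ * ‖uK t‖ :=
        mul_le_mul_of_nonneg_right (a.le_opNorm (u s)) hN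
      have ha : |a (u s) (uK t)| ≤ ‖a‖ * ‖u s‖ * ‖uK t‖ := le_trans ha1 ha2
      rw [abs_mul]
      calc |k₁ t s - k₃ t s| * |a (u s) (uK t)| ≤ Ckt * (‖a‖ * ‖u s‖ * ‖uK t‖) :=
            mul_le_mul hk ha (abs_nonneg _) hCkt
        _ = Ckt * ‖a‖ * ‖uK t‖ * ‖u s‖ := by ring
    have hconst : (∫ s in (0:ℝ)..t, Ckt * ‖a‖ * ‖uK t‖ * ‖u s‖)
        = Ckt * ‖a‖ * ‖uK t‖ * ∫ s in (0:ℝ)..t, ‖u s‖ := by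
      rw [← intervalIntegral.integral_const_mul]
    calc (∫ s in (0:ℝ)..t, (k₁ t s - k₃ t s) * a (u s) (uK t))
        ≤ ∫ s in (0:ℝ)..t, |(k₁ t s - k₃ t s) * a (u s) (uK t)| := habs
      _ ≤ ∫ s in (0:ℝ)..t, Ckt * ‖a‖ * ‖uK t‖ * ‖u s‖ := hmono
      _ = Ckt * ‖a‖ * ‖uK t‖ * ∫ s in (0:ℝ)..t, ‖u s‖ := hconst
      _ = Ckt * ‖a‖ * (∫ s in (0:ℝ)..t, ‖u s‖) * ‖uK t‖ := by ring
  have hug2 : ‖a‖ * ‖ug t‖ ≤ ‖a‖ / β * ‖g t‖ := by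
    have h : ‖ug t‖ ≤ ‖g t‖ / β := by
      rw [le_div_iff₀ hβ]; linarith [hub]
    calc ‖a‖ * ‖ug t‖ ≤ ‖a‖ * (‖g t‖ / β) :=
          mul_le_mul_of_nonneg_left h (ContinuousLinearMap.opNorm_nonneg a)
      _ = ‖a‖ / β * ‖g t‖ := by ring
  have hcoerc := hcoer (uK t) hbK
  have hintnn : (0:ℝ) ≤ ∫ s in (0:ℝ)..t, ‖u s‖ :=
    intervalIntegral.integral_nonneg ht0 (fun s _ => norm_nonneg _)
  have hmul : ‖a‖ * ‖ug t‖ * ‖uK t‖ ≤ ‖a‖ / β * ‖g t‖ * ‖uK t‖ :=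
    mul_le_mul_of_nonneg_right hug2 hN
  have hkey2 : α₀ * ‖uK t‖ ^ 2
      ≤ (‖f t‖ + ‖a‖ / β * ‖g t‖ + Ckt * ‖a‖ * ∫ s in (0:ℝ)..t, ‖u s‖) * ‖uK t‖ := by
    have hrhs : (‖f t‖ + ‖a‖ / β * ‖g t‖ + Ckt * ‖a‖ * ∫ s in (0:ℝ)..t, ‖u s‖) * ‖uK t‖
        = ‖f t‖ * ‖uK t‖ + ‖a‖ / β * ‖g t‖ * ‖uK t‖
          + Ckt * ‖a‖ * (∫ s in (0:ℝ)..t, ‖u s‖) * ‖uK t‖ := by ring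
    have havv : a (uK t) (uK t)
        ≤ (‖f t‖ + ‖a‖ / β * ‖g t‖ + Ckt * ‖a‖ * ∫ s in (0:ℝ)..t, ‖u s‖) * ‖uK t‖ := by
      rw [hkey, hrhs]
      linarith [hb1, hb2, hb3, hmul]
    linarith [hcoerc]
  have hRnn : (0:ℝ) ≤ ‖f t‖ + ‖a‖ / β * ‖g t‖ + Ckt * ‖a‖ * ∫ s in (0:ℝ)..t, ‖u s‖ := by
    have hg1 : (0:ℝ) ≤ ‖a‖ / β * ‖g t‖ :=
      mul_nonneg (div_nonneg (ContinuousLinearMap.opNorm_nonneg a) hβ.le) (norm_nonneg _)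
    have hg2 : (0:ℝ) ≤ Ckt * ‖a‖ * ∫ s in (0:ℝ)..t, ‖u s‖ :=
      mul_nonneg (mul_nonneg hCkt (ContinuousLinearMap.opNorm_nonneg a)) hintnn
    have hg0 : (0:ℝ) ≤ ‖f t‖ := norm_nonneg _
    linarith
  rcases eq_or_lt_of_le hN with h0 | h0
  · rw [← h0, mul_zero]
    exact hRnn
  · have hstep : α₀ * ‖uK t‖ * ‖uK t‖
        ≤ (‖f t‖ + ‖a‖ / β * ‖g t‖ + Ckt * ‖a‖ * ∫ s in (0:ℝ)..t, ‖u s‖) * ‖uK t‖ := by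
      have heq' : α₀ * ‖uK t‖ * ‖uK t‖ = α₀ * ‖uK t‖ ^ 2 := by ring
      rw [heq']; exact hkey2
    exact le_of_mul_le_mul_right hstep h0
end
end

section
/- (Basic error estimate / quasi-optimality.) Let (u,p) be the unique solution of the mixed Volterra problem and (u_h,p_h) the unique solution of the semi-discrete problem. Then there exists a constant C > 0 depending only on ‖a‖, ‖b‖, α₀*, β*, T and the kernel bounds C_{k₁}, C_{k₂}, C_{k₃}, C_{k̃} — in particular independent of the choice of subspaces 𝒱_h, 𝒬_h — such that ‖u − u_h‖_{L¹(J;𝒱)} + ‖p − p_h‖_{L¹(J;𝒬)} ≤ C ( inf_{v ∈ L¹(J;𝒱_h)} ‖u − v‖_{L¹(J;𝒱)} + inf_{q ∈ L¹(J;𝒬_h)} ‖p − q‖_{L¹(J;𝒬)} ). -/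
set_option maxHeartbeats 2000000
set_option linter.unusedSectionVars false

open MeasureTheory Real Set
open scoped ENNReal

noncomputable section

variable {V Q : Type*}
  [NormedAddCommGroup V] [InnerProductSpace ℝ V] [CompleteSpace V]
  [NormedAddCommGroup Q] [InnerProductSpace ℝ Q] [CompleteSpace Q]

lemma l1_gronwall {T K : ℝ} (hT : 0 ≤ T) (hK : 0 < K) {h A : ℝ → ℝ}
    (hh : IntegrableOn h (Icc 0 T)) (hA : IntegrableOn A (Icc 0 T))
    (hh0 : ∀ t, 0 ≤ h t) (hA0 : ∀ t, 0 ≤ A t)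
    (hineq : ∀ᵐ t ∂(volume.restrict (Icc (0:ℝ) T)),
      h t ≤ A t + K * ∫ s in (0:ℝ)..t, h s) :
    ∫ t in Icc (0:ℝ) T, h t ≤ Real.exp (K * T) * ∫ t in Icc (0:ℝ) T, A t := by
  set hb : ℝ → ℝ := (Icc (0:ℝ) T).indicator h with hbdef
  have hbInt : Integrable hb := hh.integrable_indicator measurableSet_Icc
  have hb0 : ∀ t, 0 ≤ hb t := fun t => by
    by_cases ht : t ∈ Icc (0:ℝ) T <;> simp [hbdef, indicator_apply, ht, hh0 t]
  set H : ℝ → ℝ := fun t => ∫ s in (0:ℝ)..t, hb s with Hdef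
  have Hcont : Continuous H :=
    intervalIntegral.continuous_primitive (fun a b => hbInt.intervalIntegrable) 0
  have Heq : ∀ t ∈ Icc (0:ℝ) T, H t = ∫ s in (0:ℝ)..t, h s := by
    intro t ht
    apply intervalIntegral.integral_congr
    intro s hs
    rw [uIcc_of_le ht.1] at hs
    have hsT : s ∈ Icc (0:ℝ) T := ⟨hs.1, hs.2.trans ht.2⟩
    simp only [hbdef]
    exact indicator_of_mem hsT h
  have H0 : ∀ t, 0 ≤ t → 0 ≤ H t := fun t ht =>
    intervalIntegral.integral_nonneg ht (fun s _ => hb0 s)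
  set Abar : ℝ := ∫ t in Icc (0:ℝ) T, A t with Abardef
  have hAbar0 : 0 ≤ Abar := setIntegral_nonneg measurableSet_Icc fun t _ => hA0 t
  set G : ℝ → ℝ := fun t => ∫ s in (0:ℝ)..t, H s with Gdef
  have GderivAt : ∀ t : ℝ, HasDerivAt G (H t) t := fun t =>
    (Hcont.integral_hasStrictDerivAt 0 t).hasDerivAt
  -- key claim
  have key : ∀ t ∈ Icc (0:ℝ) T, H t ≤ Abar + K * G t := by
    intro t ht
    have h0t : (0:ℝ) ≤ t := ht.1
    have hIcc : Icc (0:ℝ) t ⊆ Icc (0:ℝ) T := Icc_subset_Icc le_rfl ht.2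
    have hHint : IntervalIntegrable H volume 0 t := Hcont.intervalIntegrable 0 t
    have huIcc : uIcc (0:ℝ) t ⊆ Icc (0:ℝ) T := by
      rw [uIcc_of_le h0t]; exact hIcc
    have hAint : IntervalIntegrable A volume 0 t :=
      (hA.mono_set huIcc).intervalIntegrable
    have hineq' : ∀ᵐ s ∂(volume.restrict (Icc (0:ℝ) t)),
        hb s ≤ A s + K * H s := by
      have := ae_restrict_of_ae_restrict_of_subset hIcc hineq
      have hmem : ∀ᵐ s ∂(volume.restrict (Icc (0:ℝ) t)), s ∈ Icc (0:ℝ) t :=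
        ae_restrict_mem measurableSet_Icc
      filter_upwards [this, hmem] with s hs hsmem
      have hsT : s ∈ Icc (0:ℝ) T := hIcc hsmem
      rw [hbdef, indicator_of_mem hsT, ← Heq s hsT] at *
      exact hs
    have step1 : H t ≤ ∫ s in (0:ℝ)..t, (A s + K * H s) := by
      have : IntervalIntegrable hb volume 0 t := hbInt.intervalIntegrable
      exact intervalIntegral.integral_mono_ae_restrict h0t this
        (hAint.add (hHint.const_mul K)) hineq'
    have step2 : (∫ s in (0:ℝ)..t, (A s + K * H s))
        = (∫ s in (0:ℝ)..t, A s) + K * G t := by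
      rw [intervalIntegral.integral_add hAint (hHint.const_mul K),
        intervalIntegral.integral_const_mul]
    have step3 : (∫ s in (0:ℝ)..t, A s) ≤ Abar := by
      rw [intervalIntegral.integral_of_le h0t]
      exact setIntegral_mono_set hA
        (Filter.Eventually.of_forall fun s => hA0 s)
        ((Ioc_subset_Icc_self.trans hIcc).eventuallyLE)
    linarith [step1, step2 ▸ step1, step3]
  have hGb : ‖G T‖ ≤ gronwallBound 0 K Abar (T - 0) := by
    refine norm_le_gronwallBound_of_norm_deriv_right_le
      (f := G) (f' := H) (a := 0) (b := T)
      (Continuous.continuousOn (by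
        exact continuous_iff_continuousAt.2 fun t => (GderivAt t).continuousAt))
      (fun x _ => (GderivAt x).hasDerivWithinAt)
      (by simp [Gdef, intervalIntegral.integral_same]) ?_ T ⟨hT, le_rfl⟩
    intro x hx
    have hGx : 0 ≤ G x :=
      intervalIntegral.integral_nonneg hx.1 (fun s hs => H0 s hs.1)
    have hHx : 0 ≤ H x := H0 x hx.1
    rw [Real.norm_of_nonneg hHx, Real.norm_of_nonneg hGx]
    have := key x ⟨hx.1, hx.2.le⟩
    linarith
  have hGT : G T ≤ Abar / K * (Real.exp (K * T) - 1) := by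
    have hGx : 0 ≤ G T := intervalIntegral.integral_nonneg hT (fun s hs => H0 s hs.1)
    rw [Real.norm_of_nonneg hGx] at hGb
    rw [gronwallBound_of_K_ne_0 hK.ne'] at hGb
    simpa using hGb
  have final : H T ≤ Real.exp (K * T) * Abar := by
    have := key T ⟨hT, le_rfl⟩
    have h2 : K * G T ≤ Abar * (Real.exp (K * T) - 1) := by
      have := mul_le_mul_of_nonneg_left hGT hK.le
      calc K * G T ≤ K * (Abar / K * (Real.exp (K * T) - 1)) := this
        _ = Abar * (Real.exp (K * T) - 1) := by field_simp
    linarith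
  calc ∫ t in Icc (0:ℝ) T, h t = ∫ t in Ioc (0:ℝ) T, h t :=
        integral_Icc_eq_integral_Ioc
    _ = ∫ s in (0:ℝ)..T, h s := (intervalIntegral.integral_of_le hT).symm
    _ = H T := (Heq T ⟨hT, le_rfl⟩).symm
    _ ≤ Real.exp (K * T) * Abar := final


lemma kslice_cont {T : ℝ} {k : ℝ → ℝ → ℝ}
    (hk : ContinuousOn (fun ts : ℝ × ℝ => k ts.1 ts.2)
      {ts : ℝ × ℝ | 0 ≤ ts.2 ∧ ts.2 ≤ ts.1 ∧ ts.1 ≤ T})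
    {t : ℝ} (ht : t ∈ Icc (0:ℝ) T) :
    ContinuousOn (fun s => k t s) (Icc (0:ℝ) t) := by
  have : (fun s => k t s)
      = (fun ts : ℝ × ℝ => k ts.1 ts.2) ∘ (fun s => ((t : ℝ), s)) := rfl
  rw [this]
  apply hk.comp ((continuous_const.prodMk continuous_id).continuousOn)
  intro s hs
  exact ⟨hs.1, hs.2, ht.2⟩

lemma kint_smul {X : Type*} [NormedAddCommGroup X] {T : ℝ} {k : ℝ → ℝ → ℝ}
    [NormedSpace ℝ X]
    (hk : ContinuousOn (fun ts : ℝ × ℝ => k ts.1 ts.2)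
      {ts : ℝ × ℝ | 0 ≤ ts.2 ∧ ts.2 ≤ ts.1 ∧ ts.1 ≤ T})
    {F : ℝ → X} (hF : IntegrableOn F (Icc (0:ℝ) T))
    {t : ℝ} (ht : t ∈ Icc (0:ℝ) T) :
    IntervalIntegrable (fun s => k t s • F s) volume 0 t := by
  rw [intervalIntegrable_iff_integrableOn_Ioc_of_le ht.1]
  have hsub : Ioc (0:ℝ) t ⊆ Icc (0:ℝ) t := Ioc_subset_Icc_self
  have hsubT : Icc (0:ℝ) t ⊆ Icc (0:ℝ) T := Icc_subset_Icc le_rfl ht.2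
  have hFt : IntegrableOn F (Ioc (0:ℝ) t) := hF.mono_set (hsub.trans hsubT)
  have hkc := kslice_cont hk ht
  obtain ⟨M, hM⟩ := (isCompact_Icc (a := (0:ℝ)) (b := t)).exists_bound_of_continuousOn hkc
  have hmeas : AEStronglyMeasurable (fun s => k t s) (volume.restrict (Ioc (0:ℝ) t)) :=
    (hkc.aestronglyMeasurable measurableSet_Icc).mono_measure
      (Measure.restrict_mono hsub le_rfl)
  have hmem : MemLp (fun s => k t s) ⊤ (volume.restrict (Ioc (0:ℝ) t)) := by
    apply memLp_top_of_bound hmeas M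
    filter_upwards [ae_restrict_mem measurableSet_Ioc] with s hs
    exact hM s (hsub hs)
  exact MeasureTheory.Integrable.smul_of_top_right hFt hmem

lemma kint_mul {T : ℝ} {k : ℝ → ℝ → ℝ}
    (hk : ContinuousOn (fun ts : ℝ × ℝ => k ts.1 ts.2)
      {ts : ℝ × ℝ | 0 ≤ ts.2 ∧ ts.2 ≤ ts.1 ∧ ts.1 ≤ T})
    {r : ℝ → ℝ} (hr : IntegrableOn r (Icc (0:ℝ) T))
    {t : ℝ} (ht : t ∈ Icc (0:ℝ) T) :
    IntervalIntegrable (fun s => k t s * r s) volume 0 t := by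
  simpa [smul_eq_mul] using kint_smul hk hr ht

/-- Riesz-type representation of `b` into a finite-dimensional subspace `Qh`. -/
lemma exists_repr (b : V →L[ℝ] Q →L[ℝ] ℝ) (Qh : Submodule ℝ Q)
    (hQfin : FiniteDimensional ℝ Qh) :
    ∃ S : V →L[ℝ] Qh, (∀ v (q : Qh), (inner ℝ (S v) q : ℝ) = b v (q : Q)) ∧
      (∀ v, ‖S v‖ ≤ ‖b‖ * ‖v‖) := by
  haveI := hQfin
  haveI : CompleteSpace Qh := FiniteDimensional.complete ℝ Qh
  set riesz : (Q →L[ℝ] ℝ) →L[ℝ] Q :=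
    ((InnerProductSpace.toDual ℝ Q).symm.toContinuousLinearEquiv :
      (Q →L[ℝ] ℝ) ≃L[ℝ] Q).toContinuousLinearMap with hriesz
  refine ⟨(Submodule.orthogonalProjectionOnto Qh).comp (riesz.comp b), ?_, ?_⟩
  · intro v q
    have hr : ∀ (y : Q →L[ℝ] ℝ) (x : Q), (inner ℝ (riesz y) x : ℝ) = y x := by
      intro y x
      simp [hriesz, InnerProductSpace.toDual_symm_apply]
    have hperp := Submodule.sub_starProjection_mem_orthogonal (K := Qh) (riesz (b v))
    have h0 : (inner ℝ (riesz (b v) - (Submodule.orthogonalProjectionOnto Qh (riesz (b v)) : Q)) (q : Q) : ℝ) = 0 := by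
      rw [real_inner_comm]
      exact hperp q q.2
    have : (inner ℝ ((Submodule.orthogonalProjectionOnto Qh (riesz (b v))) : Q) (q : Q) : ℝ)
        = (inner ℝ (riesz (b v)) (q : Q) : ℝ) := by
      have := inner_sub_left (𝕜 := ℝ) (riesz (b v)) ((Submodule.orthogonalProjectionOnto Qh (riesz (b v))) : Q) (q : Q)
      rw [h0] at this  -- wrong direction; fix below
      linarith [this]
    rw [Submodule.coe_inner]
    simp only [ContinuousLinearMap.comp_apply]
    rw [this, hr]
  · intro v
    calc ‖(Submodule.orthogonalProjectionOnto Qh).comp (riesz.comp b) v‖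
        = ‖Submodule.orthogonalProjectionOnto Qh (riesz (b v))‖ := rfl
      _ ≤ ‖riesz (b v)‖ := by
          calc ‖Submodule.orthogonalProjectionOnto Qh (riesz (b v))‖
              ≤ ‖Submodule.orthogonalProjectionOnto Qh‖ * ‖riesz (b v)‖ :=
                (Submodule.orthogonalProjectionOnto Qh).le_opNorm _
            _ ≤ 1 * ‖riesz (b v)‖ := by
                have := Submodule.orthogonalProjectionOnto_norm_le Qh
                have h0 : (0:ℝ) ≤ ‖riesz (b v)‖ := norm_nonneg _
                nlinarith
            _ = ‖riesz (b v)‖ := one_mul _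
      _ = ‖b v‖ := by
          rw [hriesz]
          exact (InnerProductSpace.toDual ℝ Q).symm.norm_map (b v)
      _ ≤ ‖b‖ * ‖v‖ := b.le_opNorm v

/-- Discrete inf-sup gives a bounded lifting `L : V → Vh` with `b (L x) q = b x q` on `Qh`. -/
lemma exists_lift (b : V →L[ℝ] Q →L[ℝ] ℝ) (Vh : Submodule ℝ V) (Qh : Submodule ℝ Q)
    (hVfin : FiniteDimensional ℝ Vh) (hQfin : FiniteDimensional ℝ Qh)
    {βs : ℝ} (hβs : 0 < βs)
    (hinf : ∀ q ∈ Qh, q ≠ 0 → βs ≤ ⨆ v : Vh, b (v : V) q / (‖(v : V)‖ * ‖q‖)) :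
    ∃ L : V →L[ℝ] V, (∀ x, L x ∈ Vh) ∧ (∀ x, ∀ q ∈ Qh, b (L x) q = b x q) ∧
      (∀ x, ‖L x‖ ≤ ‖b‖ / βs * ‖x‖) := by
  haveI := hVfin; haveI := hQfin
  haveI : CompleteSpace Vh := FiniteDimensional.complete ℝ Vh
  haveI : CompleteSpace Qh := FiniteDimensional.complete ℝ Qh
  haveI : Nonempty Vh := ⟨0⟩
  obtain ⟨S, hSrep, hSnorm⟩ := exists_repr b Qh hQfin
  set Th : Vh →L[ℝ] Qh := S.comp Vh.subtypeL with hThdef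
  have hTh : ∀ (v : Vh) (q : Qh), (inner ℝ (Th v) q : ℝ) = b (v : V) (q : Q) :=
    fun v q => hSrep (v : V) q
  have hadj : ∀ (q : Qh) (v : Vh), (inner ℝ (Th.adjoint q) v : ℝ) = b (v : V) (q : Q) := by
    intro q v
    rw [ContinuousLinearMap.adjoint_inner_left, real_inner_comm, hTh]
  have hlow : ∀ q : Qh, βs * ‖q‖ ≤ ‖Th.adjoint q‖ := by
    intro q
    by_cases hq : q = 0
    · simp [hq]
    have hqQ : (q : Q) ≠ 0 := fun h => hq (by exact_mod_cast Subtype.ext h)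
    have hqpos : (0:ℝ) < ‖q‖ := norm_pos_iff.2 hq
    have h1 := hinf (q : Q) q.2 hqQ
    have hub : ∀ v : Vh, b (v : V) (q : Q) / (‖(v : V)‖ * ‖(q : Q)‖)
        ≤ ‖Th.adjoint q‖ / ‖q‖ := by
      intro v
      have hbv : b (v : V) (q : Q) ≤ ‖Th.adjoint q‖ * ‖v‖ := by
        rw [← hadj q v]
        exact real_inner_le_norm _ _
      have hnv : ‖(v : V)‖ = ‖v‖ := rfl
      by_cases hv : ‖(v : V)‖ = 0
      · have : b (v : V) (q : Q) = 0 := by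
          have : (v : V) = 0 := norm_eq_zero.1 hv
          simp [this]
        rw [this, hv, zero_mul, zero_div]
        positivity
      · have hvpos : (0:ℝ) < ‖(v : V)‖ := lt_of_le_of_ne (norm_nonneg _) (Ne.symm hv)
        have hnq : ‖(q : Q)‖ = ‖q‖ := rfl
        rw [hnq, div_le_div_iff₀ (by positivity) hqpos]
        calc b (v : V) (q : Q) * ‖q‖ ≤ (‖Th.adjoint q‖ * ‖v‖) * ‖q‖ :=
              mul_le_mul_of_nonneg_right hbv (norm_nonneg _)
          _ = ‖Th.adjoint q‖ * (‖(v : V)‖ * ‖q‖) := by rw [hnv]; ring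
    have h2 : βs ≤ ‖Th.adjoint q‖ / ‖q‖ := le_trans h1 (ciSup_le hub)
    rw [le_div_iff₀ hqpos] at h2
    linarith
  set A : Qh →L[ℝ] Qh := Th.comp Th.adjoint with hAdef
  have hAyy : ∀ y : Qh, (inner ℝ (A y) y : ℝ) = ‖Th.adjoint y‖ ^ 2 := by
    intro y
    rw [real_inner_comm]
    calc (inner ℝ y (A y) : ℝ) = (inner ℝ y (Th (Th.adjoint y)) : ℝ) := rfl
      _ = (inner ℝ (Th.adjoint y) (Th.adjoint y) : ℝ) :=
          (ContinuousLinearMap.adjoint_inner_left Th (Th.adjoint y) y).symm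
      _ = ‖Th.adjoint y‖ ^ 2 := real_inner_self_eq_norm_sq _
  have hAker : ∀ y : Qh, A y = 0 → y = 0 := by
    intro y hy
    have h0 : ‖Th.adjoint y‖ ^ 2 = 0 := by rw [← hAyy y, hy]; simp
    have h1 : ‖Th.adjoint y‖ = 0 := by nlinarith [norm_nonneg (Th.adjoint y)]
    have := hlow y
    rw [h1] at this
    have : ‖y‖ = 0 := by nlinarith [norm_nonneg y]
    exact norm_eq_zero.1 this
  have hAinj : Function.Injective (A : Qh →ₗ[ℝ] Qh) := by
    intro y1 y2 h
    have : A (y1 - y2) = 0 := by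
      rw [map_sub]
      simpa using sub_eq_zero_of_eq h
    have := hAker _ this
    exact sub_eq_zero.1 this
  have hAsurj : Function.Surjective (A : Qh →ₗ[ℝ] Qh) :=
    LinearMap.injective_iff_surjective.1 hAinj
  set e : Qh ≃ₗ[ℝ] Qh := LinearEquiv.ofBijective (A : Qh →ₗ[ℝ] Qh) ⟨hAinj, hAsurj⟩ with hedef
  set Ainv : Qh →L[ℝ] Qh := LinearMap.toContinuousLinearMap e.symm.toLinearMap with hAinvdef
  have hAinv : ∀ y, A (Ainv y) = y := fun y => e.apply_symm_apply y
  refine ⟨Vh.subtypeL.comp ((Th.adjoint).comp (Ainv.comp S)), ?_, ?_, ?_⟩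
  · intro x
    exact (Th.adjoint ((Ainv.comp S) x)).2
  · intro x q hq
    have key : Th (Th.adjoint (Ainv (S x))) = S x := hAinv (S x)
    have h1 := (hTh (Th.adjoint (Ainv (S x))) ⟨q, hq⟩).symm
    rw [key] at h1
    have h2 := hSrep x (⟨q, hq⟩ : Qh)
    exact h1.trans h2
  · intro x
    have hnorm : Vh.subtypeL.comp ((Th.adjoint).comp (Ainv.comp S)) x
        = ((Th.adjoint (Ainv (S x)) : Vh) : V) := rfl
    rw [hnorm, Submodule.norm_coe]
    have h1 : ‖Th.adjoint (Ainv (S x))‖ ^ 2 = (inner ℝ (S x) (Ainv (S x)) : ℝ) := by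
      rw [← hAyy (Ainv (S x)), hAinv (S x)]
    have h2 : (inner ℝ (S x) (Ainv (S x)) : ℝ) ≤ ‖S x‖ * ‖Ainv (S x)‖ :=
      real_inner_le_norm _ _
    have h3 : βs * ‖Ainv (S x)‖ ≤ ‖Th.adjoint (Ainv (S x))‖ := hlow (Ainv (S x))
    have h4 : ‖S x‖ ≤ ‖b‖ * ‖x‖ := hSnorm x
    rw [div_mul_eq_mul_div, le_div_iff₀ hβs]
    by_cases hv0 : ‖Th.adjoint (Ainv (S x))‖ = 0
    · rw [hv0, zero_mul]; positivity
    · have hvpos : (0:ℝ) < ‖Th.adjoint (Ainv (S x))‖ :=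
        lt_of_le_of_ne (norm_nonneg _) (Ne.symm hv0)
      set n : ℝ := ‖Th.adjoint (Ainv (S x))‖ with hn
      set m : ℝ := ‖Ainv (S x)‖ with hm
      set ys : ℝ := ‖S x‖ with hys
      have e1 : (βs * n) * n ≤ ys * n := by
        calc (βs * n) * n = βs * n ^ 2 := by ring
          _ = βs * (inner ℝ (S x) (Ainv (S x)) : ℝ) := by rw [h1]
          _ ≤ βs * (ys * m) := mul_le_mul_of_nonneg_left h2 hβs.le
          _ = ys * (βs * m) := by ring
          _ ≤ ys * n := mul_le_mul_of_nonneg_left h3 (norm_nonneg _)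
      have e2 : βs * n ≤ ys := (mul_le_mul_iff_of_pos_right hvpos).1 e1
      linarith

/-- `(u, p)` is a solution of the semi-discrete mixed Volterra problem on `J = [0, T]`
associated with the finite element subspaces `Vh ⊆ 𝒱` and `Qh ⊆ 𝒬`. -/
def SemiDiscreteSol (T : ℝ)
    (a : V →L[ℝ] V →L[ℝ] ℝ) (b : V →L[ℝ] Q →L[ℝ] ℝ)
    (k₁ k₂ k₃ : ℝ → ℝ → ℝ)
    (f : ℝ → V →L[ℝ] ℝ) (g : ℝ → Q →L[ℝ] ℝ)
    (Vh : Submodule ℝ V) (Qh : Submodule ℝ Q)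
    (u : ℝ → V) (p : ℝ → Q) : Prop :=
  (∀ t, u t ∈ Vh) ∧ (∀ t, p t ∈ Qh) ∧
  ∀ᵐ t ∂(volume.restrict (Icc (0:ℝ) T)),
    (∀ v ∈ Vh, a (u t) v + b v (p t)
        = f t v + ∫ s in (0:ℝ)..t, (k₁ t s * a (u s) v + k₂ t s * b v (p s))) ∧
    ∀ q ∈ Qh, b (u t) q = g t q + ∫ s in (0:ℝ)..t, k₃ t s * b (u s) q

theorem basic_error_estimate
    (T : ℝ) (hT : 0 ≤ T)
    (a : V →L[ℝ] V →L[ℝ] ℝ) (b : V →L[ℝ] Q →L[ℝ] ℝ)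
    (hsym : ∀ v w : V, a v w = a w v)
    (k₁ k₂ k₃ : ℝ → ℝ → ℝ)
    (hk₁c : ContinuousOn (fun ts : ℝ × ℝ => k₁ ts.1 ts.2)
      {ts : ℝ × ℝ | 0 ≤ ts.2 ∧ ts.2 ≤ ts.1 ∧ ts.1 ≤ T})
    (hk₂c : ContinuousOn (fun ts : ℝ × ℝ => k₂ ts.1 ts.2)
      {ts : ℝ × ℝ | 0 ≤ ts.2 ∧ ts.2 ≤ ts.1 ∧ ts.1 ≤ T})
    (hk₃c : ContinuousOn (fun ts : ℝ × ℝ => k₃ ts.1 ts.2)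
      {ts : ℝ × ℝ | 0 ≤ ts.2 ∧ ts.2 ≤ ts.1 ∧ ts.1 ≤ T})
    (Ck₁ Ck₂ Ck₃ : ℝ) (hCk₁ : 0 ≤ Ck₁) (hCk₂ : 0 ≤ Ck₂) (hCk₃ : 0 ≤ Ck₃)
    (hk₁b : ∀ t s : ℝ, 0 ≤ s → s ≤ t → t ≤ T → |k₁ t s| ≤ Ck₁)
    (hk₂b : ∀ t s : ℝ, 0 ≤ s → s ≤ t → t ≤ T → |k₂ t s| ≤ Ck₂)
    (hk₃b : ∀ t s : ℝ, 0 ≤ s → s ≤ t → t ≤ T → |k₃ t s| ≤ Ck₃)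
    (Ckt : ℝ) (hCkt : 0 ≤ Ckt)
    (hktb : ∀ t s : ℝ, 0 ≤ s → s ≤ t → t ≤ T → |k₁ t s - k₃ t s| ≤ Ckt)
    (αs : ℝ) (hαs : 0 < αs) (βs : ℝ) (hβs : 0 < βs) :
    ∃ C > (0:ℝ),
      ∀ (Vh : Submodule ℝ V) (Qh : Submodule ℝ Q),
        FiniteDimensional ℝ Vh → FiniteDimensional ℝ Qh →
        (∀ v ∈ Vh, (∀ q ∈ Qh, b v q = 0) → αs * ‖v‖ ^ 2 ≤ a v v) →
        (∀ q ∈ Qh, q ≠ 0 → βs ≤ ⨆ v : Vh, b (v : V) q / (‖(v : V)‖ * ‖q‖)) →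
        ∀ (f : ℝ → V →L[ℝ] ℝ) (g : ℝ → Q →L[ℝ] ℝ),
          IntegrableOn f (Icc 0 T) → IntegrableOn g (Icc 0 T) →
          ∀ (u : ℝ → V) (p : ℝ → Q),
            IntegrableOn u (Icc 0 T) → IntegrableOn p (Icc 0 T) →
            MixedVolterraSol T a b k₁ k₂ k₃ f g u p →
            ∀ (uh : ℝ → V) (ph : ℝ → Q),
              IntegrableOn uh (Icc 0 T) → IntegrableOn ph (Icc 0 T) →
              SemiDiscreteSol T a b k₁ k₂ k₃ f g Vh Qh uh ph →
              ∀ (uI : ℝ → V) (pI : ℝ → Q),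
                (∀ t, uI t ∈ Vh) → (∀ t, pI t ∈ Qh) →
                IntegrableOn uI (Icc 0 T) → IntegrableOn pI (Icc 0 T) →
                (∫ t in Icc (0:ℝ) T, ‖u t - uh t‖)
                    + (∫ t in Icc (0:ℝ) T, ‖p t - ph t‖)
                  ≤ C * ((∫ t in Icc (0:ℝ) T, ‖u t - uI t‖)
                      + ∫ t in Icc (0:ℝ) T, ‖p t - pI t‖) := by
  classical
  set Ca : ℝ := ‖a‖ with hCadef
  set Cb : ℝ := ‖b‖ with hCbdef
  have hCa0 : 0 ≤ Ca := by rw [hCadef]; exact ContinuousLinearMap.opNorm_nonneg _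
  have hCb0 : 0 ≤ Cb := by rw [hCbdef]; exact ContinuousLinearMap.opNorm_nonneg _
  set CK : ℝ := Ck₁ * Ca + Ck₂ * Cb with hCKdef
  have hCK0 : 0 ≤ CK := add_nonneg (mul_nonneg hCk₁ hCa0) (mul_nonneg hCk₂ hCb0)
  set c₁ : ℝ := (1 + Cb / βs) * (1 + Ca / αs) with hc₁def
  set c₂ : ℝ := Cb / αs with hc₂def
  set c₃ : ℝ := CK / αs with hc₃def
  have hc₁0 : 0 ≤ c₁ := mul_nonneg
    (by have := div_nonneg hCb0 hβs.le; linarith)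
    (by have := div_nonneg hCa0 hαs.le; linarith)
  have hc₂0 : 0 ≤ c₂ := div_nonneg hCb0 hαs.le
  have hc₃0 : 0 ≤ c₃ := div_nonneg hCK0 hαs.le
  have hx0 : 0 ≤ 1 + Ca / βs := by have := div_nonneg hCa0 hβs.le; linarith
  set K₁ : ℝ := (1 + Ca / βs) * (c₁ + c₂) + Cb / βs with hK₁def
  set K₂ : ℝ := (1 + Ca / βs) * c₃ + CK / βs with hK₂def
  have hK₁0 : 0 ≤ K₁ := add_nonneg (mul_nonneg hx0 (add_nonneg hc₁0 hc₂0))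
    (div_nonneg hCb0 hβs.le)
  have hK₂0 : 0 ≤ K₂ := add_nonneg (mul_nonneg hx0 hc₃0) (div_nonneg hCK0 hβs.le)
  set KK : ℝ := K₂ + 1 with hKKdef
  have hKK : 0 < KK := by linarith
  set C : ℝ := Real.exp (KK * T) * (K₁ + KK * T) + 1 with hCdef
  have hC0 : 0 < C := by
    have h1 : 0 ≤ Real.exp (KK * T) * (K₁ + KK * T) :=
      mul_nonneg (Real.exp_nonneg _) (by linarith [mul_nonneg hKK.le hT])
    linarith
  refine ⟨C, hC0, ?_⟩
  intro Vh Qh hVfin hQfin hcoer hinf f g hfInt hgInt u p huInt hpInt hsol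
    uh ph huhInt hphInt hsolh uI pI huImem hpImem huIInt hpIInt
  haveI := hVfin; haveI := hQfin
  obtain ⟨huhmem, hphmem, hsolh'⟩ := hsolh
  obtain ⟨S, hSrep, hSnorm⟩ := exists_repr b Qh hQfin
  obtain ⟨L, hLmem, hLrep, hLnorm⟩ := exists_lift b Vh Qh hVfin hQfin hβs hinf
  -- integrability of the error functions
  have heInt : IntegrableOn (fun s => u s - uh s) (Icc (0:ℝ) T) := huInt.sub huhInt
  have hρInt : IntegrableOn (fun s => u s - uI s) (Icc (0:ℝ) T) := huInt.sub huIInt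
  have hψInt : IntegrableOn (fun s => p s - pI s) (Icc (0:ℝ) T) := hpInt.sub hpIInt
  have hφInt : IntegrableOn (fun s => pI s - ph s) (Icc (0:ℝ) T) := hpIInt.sub hphInt
  have hζInt : IntegrableOn (fun s => S (u s - uh s)) (Icc (0:ℝ) T) :=
    S.integrable_comp heInt
  -- scalar integrability helpers
  have haInt : ∀ (F : ℝ → V), IntegrableOn F (Icc (0:ℝ) T) → ∀ v : V,
      IntegrableOn (fun s => a (F s) v) (Icc (0:ℝ) T) := by
    intro F hF v
    have := (a.flip v).integrable_comp hF
    simpa [IntegrableOn, ContinuousLinearMap.flip_apply] using this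
  have hbInt2 : ∀ (G : ℝ → Q), IntegrableOn G (Icc (0:ℝ) T) → ∀ v : V,
      IntegrableOn (fun s => b v (G s)) (Icc (0:ℝ) T) := fun G hG v =>
    (b v).integrable_comp hG
  have hbInt3 : ∀ (F : ℝ → V), IntegrableOn F (Icc (0:ℝ) T) → ∀ q : Q,
      IntegrableOn (fun s => b (F s) q) (Icc (0:ℝ) T) := by
    intro F hF q
    have := (b.flip q).integrable_comp hF
    simpa [IntegrableOn, ContinuousLinearMap.flip_apply] using this
  -- pointwise operator bounds
  have habs : ∀ x y : V, |a x y| ≤ Ca * ‖x‖ * ‖y‖ := by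
    intro x y
    have := a.le_opNorm₂ x y
    rwa [Real.norm_eq_abs] at this
  have hbabs : ∀ (x : V) (y : Q), |b x y| ≤ Cb * ‖x‖ * ‖y‖ := by
    intro x y
    have := b.le_opNorm₂ x y
    rwa [Real.norm_eq_abs] at this
  -- difference equations
  have hdiff : ∀ᵐ t ∂(volume.restrict (Icc (0:ℝ) T)),
      (∀ v ∈ Vh, a (u t - uh t) v + b v (p t - ph t)
        = ∫ s in (0:ℝ)..t, (k₁ t s * a (u s - uh s) v + k₂ t s * b v (p s - ph s))) ∧
      (∀ q ∈ Qh, b (u t - uh t) q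
        = ∫ s in (0:ℝ)..t, k₃ t s * b (u s - uh s) q) := by
    filter_upwards [hsol, hsolh', ae_restrict_mem measurableSet_Icc] with t h1 h2 ht
    constructor
    · intro v hv
      have e1 := h1.1 v
      have e2 := h2.1 v hv
      have i1 := kint_mul hk₁c (haInt u huInt v) ht
      have i2 := kint_mul hk₂c (hbInt2 p hpInt v) ht
      have i3 := kint_mul hk₁c (haInt uh huhInt v) ht
      have i4 := kint_mul hk₂c (hbInt2 ph hphInt v) ht
      have hIsub : (∫ s in (0:ℝ)..t, (k₁ t s * a (u s) v + k₂ t s * b v (p s)))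
          - (∫ s in (0:ℝ)..t, (k₁ t s * a (uh s) v + k₂ t s * b v (ph s)))
          = ∫ s in (0:ℝ)..t, (k₁ t s * a (u s - uh s) v + k₂ t s * b v (p s - ph s)) := by
        rw [← intervalIntegral.integral_sub (i1.add i2) (i3.add i4)]
        apply intervalIntegral.integral_congr
        intro s _
        simp only [map_sub, ContinuousLinearMap.sub_apply]
        ring
      have lhs : a (u t - uh t) v + b v (p t - ph t)
          = (a (u t) v + b v (p t)) - (a (uh t) v + b v (ph t)) := by
        simp only [map_sub, ContinuousLinearMap.sub_apply]
        ring
      rw [lhs, e1, e2]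
      linarith [hIsub]
    · intro q hq
      have e1 := h1.2 q
      have e2 := h2.2 q hq
      have i1 := kint_mul hk₃c (hbInt3 u huInt q) ht
      have i2 := kint_mul hk₃c (hbInt3 uh huhInt q) ht
      have hIsub : (∫ s in (0:ℝ)..t, k₃ t s * b (u s) q)
          - (∫ s in (0:ℝ)..t, k₃ t s * b (uh s) q)
          = ∫ s in (0:ℝ)..t, k₃ t s * b (u s - uh s) q := by
        rw [← intervalIntegral.integral_sub i1 i2]
        apply intervalIntegral.integral_congr
        intro s _
        simp only [map_sub, ContinuousLinearMap.sub_apply]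
        ring
      have lhs : b (u t - uh t) q = b (u t) q - b (uh t) q := by
        simp only [map_sub, ContinuousLinearMap.sub_apply]
      rw [lhs, e1, e2]
      linarith [hIsub]
  -- Step A : the discrete divergence error vanishes
  have hζineq : ∀ᵐ t ∂(volume.restrict (Icc (0:ℝ) T)),
      ‖S (u t - uh t)‖ ≤ (0:ℝ) + (Ck₃ + 1) * ∫ s in (0:ℝ)..t, ‖S (u s - uh s)‖ := by
    filter_upwards [hdiff, ae_restrict_mem measurableSet_Icc] with t hd ht
    have iOn : ∀ {r : ℝ → ℝ}, IntegrableOn r (Icc (0:ℝ) T) →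
        IntervalIntegrable r volume 0 t := by
      intro r hr
      apply IntegrableOn.intervalIntegrable
      rw [uIcc_of_le ht.1]
      exact hr.mono_set (Icc_subset_Icc le_rfl ht.2)
    have hiζ : IntervalIntegrable (fun s => k₃ t s • S (u s - uh s)) volume 0 t :=
      kint_smul hk₃c hζInt ht
    have hvec : S (u t - uh t) = ∫ s in (0:ℝ)..t, k₃ t s • S (u s - uh s) := by
      have hforall : ∀ q : Qh, (inner ℝ (S (u t - uh t)) q : ℝ)
          = (inner ℝ (∫ s in (0:ℝ)..t, k₃ t s • S (u s - uh s)) q : ℝ) := by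
        intro q
        rw [hSrep _ q, hd.2 (q : Q) q.2]
        calc (∫ s in (0:ℝ)..t, k₃ t s * b (u s - uh s) (q : Q))
            = ∫ s in (0:ℝ)..t, (innerSL ℝ (q : Qh)) (k₃ t s • S (u s - uh s)) := by
              apply intervalIntegral.integral_congr
              intro s _
              simp only [innerSL_apply_apply, real_inner_smul_right]
              rw [real_inner_comm, hSrep]
          _ = (innerSL ℝ (q : Qh)) (∫ s in (0:ℝ)..t, k₃ t s • S (u s - uh s)) :=
              ContinuousLinearMap.intervalIntegral_comp_comm _ hiζ
          _ = (inner ℝ (∫ s in (0:ℝ)..t, k₃ t s • S (u s - uh s)) q : ℝ) := by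
              rw [innerSL_apply_apply, real_inner_comm]
      have hzero := hforall (S (u t - uh t) - ∫ s in (0:ℝ)..t, k₃ t s • S (u s - uh s))
      have hself : (inner ℝ (S (u t - uh t) - ∫ s in (0:ℝ)..t, k₃ t s • S (u s - uh s))
          (S (u t - uh t) - ∫ s in (0:ℝ)..t, k₃ t s • S (u s - uh s)) : ℝ) = 0 := by
        rw [inner_sub_left]; linarith
      exact sub_eq_zero.1 (inner_self_eq_zero.1 hself)
    rw [hvec, zero_add]
    have hnle := intervalIntegral.norm_integral_le_integral_norm
      (f := fun s => k₃ t s • S (u s - uh s)) (μ := volume) ht.1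
    have hmono : (∫ s in (0:ℝ)..t, ‖k₃ t s • S (u s - uh s)‖)
        ≤ ∫ s in (0:ℝ)..t, Ck₃ * ‖S (u s - uh s)‖ := by
      apply intervalIntegral.integral_mono_on ht.1 hiζ.norm
        (iOn (hζInt.norm.const_mul Ck₃))
      intro s hs
      rw [norm_smul, Real.norm_eq_abs]
      exact mul_le_mul_of_nonneg_right (hk₃b t s hs.1 hs.2 ht.2) (norm_nonneg _)
    have h0 : 0 ≤ ∫ s in (0:ℝ)..t, ‖S (u s - uh s)‖ :=
      intervalIntegral.integral_nonneg ht.1 (fun s _ => norm_nonneg _)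
    calc ‖∫ s in (0:ℝ)..t, k₃ t s • S (u s - uh s)‖
        ≤ ∫ s in (0:ℝ)..t, ‖k₃ t s • S (u s - uh s)‖ := hnle
      _ ≤ ∫ s in (0:ℝ)..t, Ck₃ * ‖S (u s - uh s)‖ := hmono
      _ = Ck₃ * ∫ s in (0:ℝ)..t, ‖S (u s - uh s)‖ :=
          intervalIntegral.integral_const_mul _ _
      _ ≤ (Ck₃ + 1) * ∫ s in (0:ℝ)..t, ‖S (u s - uh s)‖ := by linarith
  have hζ0 : ∀ᵐ t ∂(volume.restrict (Icc (0:ℝ) T)), S (u t - uh t) = 0 := by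
    have hnInt : IntegrableOn (fun s => ‖S (u s - uh s)‖) (Icc (0:ℝ) T) := hζInt.norm
    have hAzero : IntegrableOn (fun _ : ℝ => (0:ℝ)) (Icc (0:ℝ) T) :=
      integrableOn_const measure_Icc_lt_top.ne
    have hg := l1_gronwall hT (show (0:ℝ) < Ck₃ + 1 by linarith) hnInt hAzero
      (fun t => norm_nonneg _) (fun t => le_rfl) hζineq
    have hint0 : (∫ t in Icc (0:ℝ) T, ‖S (u t - uh t)‖) = 0 := by
      refine le_antisymm ?_ (setIntegral_nonneg measurableSet_Icc fun t _ => norm_nonneg _)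
      simpa using hg
    have hae := (integral_eq_zero_iff_of_nonneg_ae
      (Filter.Eventually.of_forall fun t => norm_nonneg _) hnInt).1 hint0
    filter_upwards [hae] with t ht2
    exact norm_eq_zero.1 (by simpa using ht2)
  -- main pointwise estimate
  set Ψ : ℝ := ∫ t in Icc (0:ℝ) T, ‖p t - pI t‖ with hΨdef
  set R : ℝ := ∫ t in Icc (0:ℝ) T, ‖u t - uI t‖ with hRdef
  have hΨ0 : 0 ≤ Ψ := by
    rw [hΨdef]; exact setIntegral_nonneg measurableSet_Icc fun t _ => norm_nonneg _
  have hR0 : 0 ≤ R := by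
    rw [hRdef]; exact setIntegral_nonneg measurableSet_Icc fun t _ => norm_nonneg _
  have hmain : ∀ᵐ t ∂(volume.restrict (Icc (0:ℝ) T)),
      ‖u t - uh t‖ + ‖pI t - ph t‖
        ≤ (K₁ * (‖u t - uI t‖ + ‖p t - pI t‖) + K₂ * Ψ)
          + KK * ∫ s in (0:ℝ)..t, (‖u s - uh s‖ + ‖pI s - ph s‖) := by
    filter_upwards [hdiff, hζ0, ae_restrict_mem measurableSet_Icc] with t hd hζt ht
    have iOn : ∀ {r : ℝ → ℝ}, IntegrableOn r (Icc (0:ℝ) T) →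
        IntervalIntegrable r volume 0 t := by
      intro r hr
      apply IntegrableOn.intervalIntegrable
      rw [uIcc_of_le ht.1]
      exact hr.mono_set (Icc_subset_Icc le_rfl ht.2)
    set Jt : ℝ := ∫ s in (0:ℝ)..t, (‖u s - uh s‖ + ‖pI s - ph s‖) with hJdef
    have hJ0 : 0 ≤ Jt := by
      rw [hJdef]
      exact intervalIntegral.integral_nonneg ht.1
        (fun s _ => add_nonneg (norm_nonneg _) (norm_nonneg _))
    have hψt : (∫ s in (0:ℝ)..t, ‖p s - pI s‖) ≤ Ψ := by
      rw [intervalIntegral.integral_of_le ht.1, hΨdef]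
      exact setIntegral_mono_set hψInt.norm
        (Filter.Eventually.of_forall fun s => norm_nonneg _)
        ((Ioc_subset_Icc_self.trans (Icc_subset_Icc le_rfl ht.2)).eventuallyLE)
    -- b-orthogonality of the error against Qh
    have hbez : ∀ q ∈ Qh, b (u t - uh t) q = 0 := by
      intro q hq
      have h1 := hSrep (u t - uh t) ⟨q, hq⟩
      rw [hζt] at h1
      simpa using h1.symm
    -- the corrected interpolant
    set z : V := L (u t - uI t) with hzdef
    set w : V := (uI t - uh t) + z with hwdef
    have hwmem : w ∈ Vh := Vh.add_mem (Vh.sub_mem (huImem t) (huhmem t)) (hLmem _)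
    have hwb : ∀ q ∈ Qh, b w q = 0 := by
      intro q hq
      have h1 : w = ((u t - uh t) - (u t - uI t)) + z := by rw [hwdef]; abel
      have h2 := hLrep (u t - uI t) q hq
      have h3 := hbez q hq
      rw [h1, hzdef]
      simp only [map_add, map_sub, ContinuousLinearMap.add_apply,
        ContinuousLinearMap.sub_apply] at h2 h3 ⊢
      linarith
    -- the Volterra equation tested with w, with pressures reduced to ψ
    have hηw : ∀ s : ℝ, b w (p s - ph s) = b w (p s - pI s) := by
      intro s
      have h1 : p s - ph s = (p s - pI s) + (pI s - ph s) := by abel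
      rw [h1, map_add, hwb _ (Qh.sub_mem (hpImem s) (hphmem s)), add_zero]
    have hE1w : a (u t - uh t) w + b w (p t - pI t)
        = ∫ s in (0:ℝ)..t, (k₁ t s * a (u s - uh s) w + k₂ t s * b w (p s - pI s)) := by
      rw [← hηw t, hd.1 w hwmem]
      apply intervalIntegral.integral_congr
      intro s _
      simp only [hηw]
    -- integral bounds
    set I1 : ℝ := ∫ s in (0:ℝ)..t,
      (Ck₁ * Ca * ‖u s - uh s‖ + Ck₂ * Cb * ‖p s - pI s‖) with hI1def
    set I2 : ℝ := ∫ s in (0:ℝ)..t,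
      (Ck₁ * Ca * ‖u s - uh s‖ + Ck₂ * Cb * (‖p s - pI s‖ + ‖pI s - ph s‖)) with hI2def
    have iI1 : IntervalIntegrable (fun s =>
        Ck₁ * Ca * ‖u s - uh s‖ + Ck₂ * Cb * ‖p s - pI s‖) volume 0 t :=
      iOn ((heInt.norm.const_mul _).add (hψInt.norm.const_mul _))
    have iI2 : IntervalIntegrable (fun s =>
        Ck₁ * Ca * ‖u s - uh s‖ + Ck₂ * Cb * (‖p s - pI s‖ + ‖pI s - ph s‖)) volume 0 t :=
      iOn ((heInt.norm.const_mul _).add ((hψInt.norm.add hφInt.norm).const_mul _))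
    have hI10 : 0 ≤ I1 := by
      rw [hI1def]
      refine intervalIntegral.integral_nonneg ht.1 (fun s _ => ?_)
      have := norm_nonneg (u s - uh s); have := norm_nonneg (p s - pI s)
      positivity
    have hI20 : 0 ≤ I2 := by
      rw [hI2def]
      refine intervalIntegral.integral_nonneg ht.1 (fun s _ => ?_)
      have := norm_nonneg (u s - uh s); have := norm_nonneg (p s - pI s)
      have := norm_nonneg (pI s - ph s)
      positivity
    have hI12 : I1 ≤ I2 := by
      rw [hI1def, hI2def]
      apply intervalIntegral.integral_mono_on ht.1 iI1 iI2
      intro s _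
      have h1 := norm_nonneg (pI s - ph s)
      have h2 : 0 ≤ Ck₂ * Cb * ‖pI s - ph s‖ := mul_nonneg (mul_nonneg hCk₂ hCb0) h1
      linarith
    have hI2J : I2 ≤ CK * (Jt + Ψ) := by
      have hmono : I2 ≤ ∫ s in (0:ℝ)..t,
          (CK * (‖u s - uh s‖ + ‖pI s - ph s‖) + CK * ‖p s - pI s‖) := by
        rw [hI2def]
        have hg1 : IntervalIntegrable (fun s =>
            CK * (‖u s - uh s‖ + ‖pI s - ph s‖) + CK * ‖p s - pI s‖) volume 0 t := by
          have hg2 : IntervalIntegrable (fun s => ‖u s - uh s‖ + ‖pI s - ph s‖) volume 0 t :=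
            iOn (heInt.norm.add hφInt.norm)
          have hg3 : IntervalIntegrable (fun s => ‖p s - pI s‖) volume 0 t := iOn hψInt.norm
          exact (hg2.const_mul CK).add (hg3.const_mul CK)
        apply intervalIntegral.integral_mono_on ht.1 iI2 hg1
        intro s _
        have h1 := norm_nonneg (u s - uh s)
        have h2 := norm_nonneg (p s - pI s)
        have h3 := norm_nonneg (pI s - ph s)
        have e1 : Ck₁ * Ca ≤ CK := by
          rw [hCKdef]; linarith [mul_nonneg hCk₂ hCb0]
        have e2 : Ck₂ * Cb ≤ CK := by
          rw [hCKdef]; linarith [mul_nonneg hCk₁ hCa0]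
        linarith [mul_le_mul_of_nonneg_right e1 h1, mul_le_mul_of_nonneg_right e2 h2,
          mul_le_mul_of_nonneg_right e2 h3]
      have hsplit : (∫ s in (0:ℝ)..t,
          (CK * (‖u s - uh s‖ + ‖pI s - ph s‖) + CK * ‖p s - pI s‖))
          = CK * Jt + CK * ∫ s in (0:ℝ)..t, ‖p s - pI s‖ := by
        have hg2 : IntervalIntegrable (fun s => ‖u s - uh s‖ + ‖pI s - ph s‖) volume 0 t :=
          iOn (heInt.norm.add hφInt.norm)
        have hg3 : IntervalIntegrable (fun s => ‖p s - pI s‖) volume 0 t := iOn hψInt.norm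
        rw [intervalIntegral.integral_add (hg2.const_mul CK) (hg3.const_mul CK),
          intervalIntegral.integral_const_mul, intervalIntegral.integral_const_mul, hJdef]
      have := mul_le_mul_of_nonneg_left hψt hCK0
      calc I2 ≤ CK * Jt + CK * ∫ s in (0:ℝ)..t, ‖p s - pI s‖ := by
            rw [← hsplit]; exact hmono
        _ ≤ CK * Jt + CK * Ψ := by linarith
        _ = CK * (Jt + Ψ) := by ring
    have hI1J : I1 ≤ CK * (Jt + Ψ) := le_trans hI12 hI2J
    -- bound on the tested Volterra integral, for arbitrary test function v
    have hIb2 : ∀ v : V, |∫ s in (0:ℝ)..t,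
        (k₁ t s * a (u s - uh s) v + k₂ t s * b v (p s - ph s))| ≤ I2 * ‖v‖ := by
      intro v
      have hiv : IntervalIntegrable (fun s =>
          k₁ t s * a (u s - uh s) v + k₂ t s * b v (p s - ph s)) volume 0 t :=
        (kint_mul hk₁c (haInt _ heInt v) ht).add
          (kint_mul hk₂c (hbInt2 _ (hpInt.sub hphInt) v) ht)
      have h1 : ‖∫ s in (0:ℝ)..t,
          (k₁ t s * a (u s - uh s) v + k₂ t s * b v (p s - ph s))‖
          ≤ ∫ s in (0:ℝ)..t,
            ‖k₁ t s * a (u s - uh s) v + k₂ t s * b v (p s - ph s)‖ :=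
        intervalIntegral.norm_integral_le_integral_norm ht.1
      have h2 : (∫ s in (0:ℝ)..t,
            ‖k₁ t s * a (u s - uh s) v + k₂ t s * b v (p s - ph s)‖)
          ≤ ∫ s in (0:ℝ)..t,
            (Ck₁ * Ca * ‖u s - uh s‖ + Ck₂ * Cb * (‖p s - pI s‖ + ‖pI s - ph s‖)) * ‖v‖ := by
        apply intervalIntegral.integral_mono_on ht.1 hiv.norm
          (iI2.mul_const _)
        intro s hs
        rw [Real.norm_eq_abs]
        have b1 : |k₁ t s * a (u s - uh s) v| ≤ Ck₁ * (Ca * ‖u s - uh s‖ * ‖v‖) := by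
          rw [abs_mul]
          exact mul_le_mul (hk₁b t s hs.1 hs.2 ht.2) (habs _ _) (abs_nonneg _) hCk₁
        have hηn : ‖p s - ph s‖ ≤ ‖p s - pI s‖ + ‖pI s - ph s‖ := by
          calc ‖p s - ph s‖ = ‖(p s - pI s) + (pI s - ph s)‖ := by rw [sub_add_sub_cancel]
            _ ≤ _ := norm_add_le _ _
        have b2 : |k₂ t s * b v (p s - ph s)| ≤ Ck₂ * (Cb * ‖v‖ * (‖p s - pI s‖ + ‖pI s - ph s‖)) := by
          rw [abs_mul]
          have hb1 : |b v (p s - ph s)| ≤ Cb * ‖v‖ * (‖p s - pI s‖ + ‖pI s - ph s‖) := by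
            refine le_trans (hbabs v _) ?_
            exact mul_le_mul_of_nonneg_left hηn (mul_nonneg hCb0 (norm_nonneg _))
          exact mul_le_mul (hk₂b t s hs.1 hs.2 ht.2) hb1 (abs_nonneg _) hCk₂
        calc |k₁ t s * a (u s - uh s) v + k₂ t s * b v (p s - ph s)|
            ≤ |k₁ t s * a (u s - uh s) v| + |k₂ t s * b v (p s - ph s)| := abs_add_le _ _
          _ ≤ Ck₁ * (Ca * ‖u s - uh s‖ * ‖v‖)
              + Ck₂ * (Cb * ‖v‖ * (‖p s - pI s‖ + ‖pI s - ph s‖)) := by linarith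
          _ = (Ck₁ * Ca * ‖u s - uh s‖ + Ck₂ * Cb * (‖p s - pI s‖ + ‖pI s - ph s‖)) * ‖v‖ := by
              ring
      have h3 : (∫ s in (0:ℝ)..t,
            (Ck₁ * Ca * ‖u s - uh s‖ + Ck₂ * Cb * (‖p s - pI s‖ + ‖pI s - ph s‖)) * ‖v‖)
          = I2 * ‖v‖ := by
        rw [intervalIntegral.integral_mul_const, hI2def]
      rw [← Real.norm_eq_abs]
      linarith [h1, h2, h3.le, h3.ge]
    -- similar bound for the ψ-reduced integral tested with w
    have hIb1 : |∫ s in (0:ℝ)..t,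
        (k₁ t s * a (u s - uh s) w + k₂ t s * b w (p s - pI s))| ≤ I1 * ‖w‖ := by
      have hiv : IntervalIntegrable (fun s =>
          k₁ t s * a (u s - uh s) w + k₂ t s * b w (p s - pI s)) volume 0 t :=
        (kint_mul hk₁c (haInt _ heInt w) ht).add
          (kint_mul hk₂c (hbInt2 _ hψInt w) ht)
      have h1 : ‖∫ s in (0:ℝ)..t,
          (k₁ t s * a (u s - uh s) w + k₂ t s * b w (p s - pI s))‖
          ≤ ∫ s in (0:ℝ)..t,
            ‖k₁ t s * a (u s - uh s) w + k₂ t s * b w (p s - pI s)‖ :=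
        intervalIntegral.norm_integral_le_integral_norm ht.1
      have h2 : (∫ s in (0:ℝ)..t,
            ‖k₁ t s * a (u s - uh s) w + k₂ t s * b w (p s - pI s)‖)
          ≤ ∫ s in (0:ℝ)..t,
            (Ck₁ * Ca * ‖u s - uh s‖ + Ck₂ * Cb * ‖p s - pI s‖) * ‖w‖ := by
        apply intervalIntegral.integral_mono_on ht.1 hiv.norm (iI1.mul_const _)
        intro s hs
        rw [Real.norm_eq_abs]
        have b1 : |k₁ t s * a (u s - uh s) w| ≤ Ck₁ * (Ca * ‖u s - uh s‖ * ‖w‖) := by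
          rw [abs_mul]
          exact mul_le_mul (hk₁b t s hs.1 hs.2 ht.2) (habs _ _) (abs_nonneg _) hCk₁
        have b2 : |k₂ t s * b w (p s - pI s)| ≤ Ck₂ * (Cb * ‖w‖ * ‖p s - pI s‖) := by
          rw [abs_mul]
          exact mul_le_mul (hk₂b t s hs.1 hs.2 ht.2) (hbabs _ _) (abs_nonneg _) hCk₂
        calc |k₁ t s * a (u s - uh s) w + k₂ t s * b w (p s - pI s)|
            ≤ |k₁ t s * a (u s - uh s) w| + |k₂ t s * b w (p s - pI s)| := abs_add_le _ _
          _ ≤ Ck₁ * (Ca * ‖u s - uh s‖ * ‖w‖) + Ck₂ * (Cb * ‖w‖ * ‖p s - pI s‖) := by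
              linarith
          _ = (Ck₁ * Ca * ‖u s - uh s‖ + Ck₂ * Cb * ‖p s - pI s‖) * ‖w‖ := by ring
      have h3 : (∫ s in (0:ℝ)..t,
            (Ck₁ * Ca * ‖u s - uh s‖ + Ck₂ * Cb * ‖p s - pI s‖) * ‖w‖) = I1 * ‖w‖ := by
        rw [intervalIntegral.integral_mul_const, hI1def]
      rw [← Real.norm_eq_abs]
      linarith [h1, h2, h3.le, h3.ge]
    -- coercivity estimate for w
    have hco := hcoer w hwmem hwb
    have haww : a w w = a (u t - uh t) w - a (u t - uI t) w + a z w := by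
      have h1 : w = ((u t - uh t) - (u t - uI t)) + z := by rw [hwdef]; abel
      nth_rewrite 1 [h1]
      simp only [map_add, map_sub, ContinuousLinearMap.add_apply,
        ContinuousLinearMap.sub_apply]
    have hzb : ‖z‖ ≤ Cb / βs * ‖u t - uI t‖ := by rw [hzdef]; exact hLnorm _
    have hz0 : 0 ≤ ‖z‖ := norm_nonneg _
    have hW : αs * ‖w‖ ≤ Cb * ‖p t - pI t‖ + Ca * ‖u t - uI t‖ + Ca * ‖z‖ + I1 := by
      have haew : a (u t - uh t) w
          = (∫ s in (0:ℝ)..t, (k₁ t s * a (u s - uh s) w + k₂ t s * b w (p s - pI s)))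
            - b w (p t - pI t) := by linarith [hE1w]
      have l1 : (∫ s in (0:ℝ)..t,
          (k₁ t s * a (u s - uh s) w + k₂ t s * b w (p s - pI s))) ≤ I1 * ‖w‖ :=
        le_trans (le_abs_self _) hIb1
      have l2 : -b w (p t - pI t) ≤ Cb * ‖w‖ * ‖p t - pI t‖ :=
        le_trans (neg_le_abs _) (hbabs _ _)
      have l3 : -a (u t - uI t) w ≤ Ca * ‖u t - uI t‖ * ‖w‖ :=
        le_trans (neg_le_abs _) (habs _ _)
      have l4 : a z w ≤ Ca * ‖z‖ * ‖w‖ := le_trans (le_abs_self _) (habs _ _)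
      have h2 : a w w ≤ (Cb * ‖p t - pI t‖ + Ca * ‖u t - uI t‖ + Ca * ‖z‖ + I1) * ‖w‖ := by
        rw [haww, haew]
        have hexp : (Cb * ‖p t - pI t‖ + Ca * ‖u t - uI t‖ + Ca * ‖z‖ + I1) * ‖w‖
            = I1 * ‖w‖ + Cb * ‖w‖ * ‖p t - pI t‖ + Ca * ‖u t - uI t‖ * ‖w‖
              + Ca * ‖z‖ * ‖w‖ := by ring
        linarith
      by_cases hw0 : ‖w‖ = 0
      · rw [hw0, mul_zero]
        have := norm_nonneg (p t - pI t); have := norm_nonneg (u t - uI t)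
        positivity
      · have hwpos : (0:ℝ) < ‖w‖ := lt_of_le_of_ne (norm_nonneg _) (Ne.symm hw0)
        have h3 : (αs * ‖w‖) * ‖w‖ ≤ (Cb * ‖p t - pI t‖ + Ca * ‖u t - uI t‖ + Ca * ‖z‖ + I1) * ‖w‖ := by
          calc (αs * ‖w‖) * ‖w‖ = αs * ‖w‖ ^ 2 := by ring
            _ ≤ a w w := hco
            _ ≤ _ := h2
        exact (mul_le_mul_iff_of_pos_right hwpos).1 h3
    have hEt : ‖u t - uh t‖ ≤ ‖u t - uI t‖ + ‖w‖ + ‖z‖ := by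
      have h1 : u t - uh t = (u t - uI t) + w - z := by rw [hwdef]; abel
      calc ‖u t - uh t‖ = ‖(u t - uI t) + w - z‖ := by rw [h1]
        _ ≤ ‖(u t - uI t) + w‖ + ‖z‖ := norm_sub_le _ _
        _ ≤ ‖u t - uI t‖ + ‖w‖ + ‖z‖ := by
            linarith [norm_add_le (u t - uI t) w]
    -- inf-sup estimate for the discrete pressure error
    have hφb : βs * ‖pI t - ph t‖
        ≤ Ca * ‖u t - uh t‖ + Cb * ‖p t - pI t‖ + I2 := by
      have hM20 : 0 ≤ Ca * ‖u t - uh t‖ + Cb * ‖p t - pI t‖ + I2 := by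
        have := norm_nonneg (u t - uh t); have := norm_nonneg (p t - pI t)
        positivity
      by_cases hφ0 : pI t - ph t = 0
      · rw [hφ0, norm_zero, mul_zero]; exact hM20
      · have hφmem : pI t - ph t ∈ Qh := Qh.sub_mem (hpImem t) (hphmem t)
        have hφpos : (0:ℝ) < ‖pI t - ph t‖ := norm_pos_iff.2 hφ0
        have key : ∀ v : Vh, |b (v : V) (pI t - ph t)|
            ≤ (Ca * ‖u t - uh t‖ + Cb * ‖p t - pI t‖ + I2) * ‖(v : V)‖ := by
          intro v
          have hE1v := hd.1 (v : V) v.2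
          have hsplitφ : b (v : V) (pI t - ph t)
              = b (v : V) (p t - ph t) - b (v : V) (p t - pI t) := by
            have : pI t - ph t = (p t - ph t) - (p t - pI t) := by abel
            rw [this, map_sub]
          have hbφ : b (v : V) (pI t - ph t)
              = ((∫ s in (0:ℝ)..t, (k₁ t s * a (u s - uh s) (v : V)
                  + k₂ t s * b (v : V) (p s - ph s)))
                - a (u t - uh t) (v : V)) - b (v : V) (p t - pI t) := by
            rw [hsplitφ]
            have : b (v : V) (p t - ph t)
                = (∫ s in (0:ℝ)..t, (k₁ t s * a (u s - uh s) (v : V)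
                    + k₂ t s * b (v : V) (p s - ph s))) - a (u t - uh t) (v : V) := by
              linarith [hE1v]
            rw [this]
          rw [hbφ]
          have l1 := hIb2 (v : V)
          have l2 : |a (u t - uh t) (v : V)| ≤ Ca * ‖u t - uh t‖ * ‖(v : V)‖ := habs _ _
          have l3 : |b (v : V) (p t - pI t)| ≤ Cb * ‖(v : V)‖ * ‖p t - pI t‖ := hbabs _ _
          calc |((∫ s in (0:ℝ)..t, (k₁ t s * a (u s - uh s) (v : V)
                  + k₂ t s * b (v : V) (p s - ph s)))
                - a (u t - uh t) (v : V)) - b (v : V) (p t - pI t)|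
              ≤ |(∫ s in (0:ℝ)..t, (k₁ t s * a (u s - uh s) (v : V)
                  + k₂ t s * b (v : V) (p s - ph s)))
                - a (u t - uh t) (v : V)| + |b (v : V) (p t - pI t)| := abs_sub _ _
            _ ≤ |∫ s in (0:ℝ)..t, (k₁ t s * a (u s - uh s) (v : V)
                  + k₂ t s * b (v : V) (p s - ph s))|
                + |a (u t - uh t) (v : V)| + |b (v : V) (p t - pI t)| := by
                linarith [abs_sub (∫ s in (0:ℝ)..t, (k₁ t s * a (u s - uh s) (v : V)
                  + k₂ t s * b (v : V) (p s - ph s))) (a (u t - uh t) (v : V))]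
            _ ≤ I2 * ‖(v : V)‖ + Ca * ‖u t - uh t‖ * ‖(v : V)‖
                + Cb * ‖(v : V)‖ * ‖p t - pI t‖ := by linarith
            _ = (Ca * ‖u t - uh t‖ + Cb * ‖p t - pI t‖ + I2) * ‖(v : V)‖ := by ring
        haveI : Nonempty Vh := ⟨0⟩
        have hub : ∀ v : Vh, b (v : V) (pI t - ph t) / (‖(v : V)‖ * ‖pI t - ph t‖)
            ≤ (Ca * ‖u t - uh t‖ + Cb * ‖p t - pI t‖ + I2) / ‖pI t - ph t‖ := by
          intro v
          by_cases hv : ‖(v : V)‖ = 0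
          · have hv0 : (v : V) = 0 := norm_eq_zero.1 hv
            rw [hv0]
            simp only [map_zero, ContinuousLinearMap.zero_apply, norm_zero, zero_mul,
              zero_div]
            exact div_nonneg hM20 hφpos.le
          · have hvpos : (0:ℝ) < ‖(v : V)‖ := lt_of_le_of_ne (norm_nonneg _) (Ne.symm hv)
            rw [div_le_div_iff₀ (by positivity) hφpos]
            have h1 : b (v : V) (pI t - ph t)
                ≤ (Ca * ‖u t - uh t‖ + Cb * ‖p t - pI t‖ + I2) * ‖(v : V)‖ :=
              le_trans (le_abs_self _) (key v)
            calc b (v : V) (pI t - ph t) * ‖pI t - ph t‖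
                ≤ ((Ca * ‖u t - uh t‖ + Cb * ‖p t - pI t‖ + I2) * ‖(v : V)‖)
                  * ‖pI t - ph t‖ := mul_le_mul_of_nonneg_right h1 hφpos.le
              _ = (Ca * ‖u t - uh t‖ + Cb * ‖p t - pI t‖ + I2)
                  * (‖(v : V)‖ * ‖pI t - ph t‖) := by ring
        have h2 := le_trans (hinf _ hφmem hφ0) (ciSup_le hub)
        rw [le_div_iff₀ hφpos] at h2
        linarith
    -- final arithmetic
    have hWdiv : ‖w‖ ≤ (Cb * ‖p t - pI t‖ + Ca * ‖u t - uI t‖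
        + Ca * (Cb / βs * ‖u t - uI t‖) + CK * (Jt + Ψ)) / αs := by
      rw [le_div_iff₀ hαs]
      have m1 : Ca * ‖z‖ ≤ Ca * (Cb / βs * ‖u t - uI t‖) :=
        mul_le_mul_of_nonneg_left hzb hCa0
      calc ‖w‖ * αs = αs * ‖w‖ := by ring
        _ ≤ Cb * ‖p t - pI t‖ + Ca * ‖u t - uI t‖ + Ca * ‖z‖ + I1 := hW
        _ ≤ Cb * ‖p t - pI t‖ + Ca * ‖u t - uI t‖
            + Ca * (Cb / βs * ‖u t - uI t‖) + CK * (Jt + Ψ) :=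
          add_le_add (add_le_add (le_refl _) m1) hI1J
    have hE2 : ‖u t - uh t‖ ≤ c₁ * ‖u t - uI t‖ + c₂ * ‖p t - pI t‖ + c₃ * (Jt + Ψ) := by
      have key : ‖u t - uI t‖ + (Cb * ‖p t - pI t‖ + Ca * ‖u t - uI t‖
          + Ca * (Cb / βs * ‖u t - uI t‖) + CK * (Jt + Ψ)) / αs + Cb / βs * ‖u t - uI t‖
          = c₁ * ‖u t - uI t‖ + c₂ * ‖p t - pI t‖ + c₃ * (Jt + Ψ) := by
        rw [hc₁def, hc₂def, hc₃def]
        field_simp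
        try ring
      linarith [hEt, hWdiv, hzb]
    have hF2 : ‖pI t - ph t‖ ≤ (Ca * ‖u t - uh t‖ + Cb * ‖p t - pI t‖ + CK * (Jt + Ψ)) / βs := by
      rw [le_div_iff₀ hβs]
      calc ‖pI t - ph t‖ * βs = βs * ‖pI t - ph t‖ := by ring
        _ ≤ Ca * ‖u t - uh t‖ + Cb * ‖p t - pI t‖ + I2 := hφb
        _ ≤ _ := by linarith [hI2J]
    have hstep : ‖u t - uh t‖ + ‖pI t - ph t‖
        ≤ (1 + Ca / βs) * ‖u t - uh t‖ + Cb / βs * ‖p t - pI t‖ + CK / βs * (Jt + Ψ) := by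
      have expand : (Ca * ‖u t - uh t‖ + Cb * ‖p t - pI t‖ + CK * (Jt + Ψ)) / βs
          = Ca / βs * ‖u t - uh t‖ + Cb / βs * ‖p t - pI t‖ + CK / βs * (Jt + Ψ) := by
        field_simp
        try ring
      linarith [hF2]
    have hstep2 : (1 + Ca / βs) * ‖u t - uh t‖
        ≤ (1 + Ca / βs) * (c₁ * ‖u t - uI t‖ + c₂ * ‖p t - pI t‖ + c₃ * (Jt + Ψ)) :=
      mul_le_mul_of_nonneg_left hE2 hx0
    have hA1 : 0 ≤ (1 + Ca / βs) * c₁ := mul_nonneg hx0 hc₁0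
    have hA2 : 0 ≤ (1 + Ca / βs) * c₂ + Cb / βs :=
      add_nonneg (mul_nonneg hx0 hc₂0) (div_nonneg hCb0 hβs.le)
    have hP0 : 0 ≤ ‖u t - uI t‖ := norm_nonneg _
    have hS0 : 0 ≤ ‖p t - pI t‖ := norm_nonneg _
    rw [hK₁def, hK₂def, hKKdef]
    have hcomb : ‖u t - uh t‖ + ‖pI t - ph t‖
        ≤ (1 + Ca / βs) * (c₁ * ‖u t - uI t‖ + c₂ * ‖p t - pI t‖ + c₃ * (Jt + Ψ))
          + Cb / βs * ‖p t - pI t‖ + CK / βs * (Jt + Ψ) := by linarith [hstep, hstep2]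
    have hid : (1 + Ca / βs) * (c₁ * ‖u t - uI t‖ + c₂ * ‖p t - pI t‖ + c₃ * (Jt + Ψ))
          + Cb / βs * ‖p t - pI t‖ + CK / βs * (Jt + Ψ)
          + (((1 + Ca / βs) * c₂ + Cb / βs) * ‖u t - uI t‖
            + ((1 + Ca / βs) * c₁) * ‖p t - pI t‖ + Jt)
        = (((1 + Ca / βs) * (c₁ + c₂) + Cb / βs) * (‖u t - uI t‖ + ‖p t - pI t‖)
            + ((1 + Ca / βs) * c₃ + CK / βs) * Ψ)
          + ((1 + Ca / βs) * c₃ + CK / βs + 1) * Jt := by ring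
    linarith [hcomb, mul_nonneg hA2 hP0, mul_nonneg hA1 hS0, hJ0, hid]
  -- Grönwall and conclusion
  have hhInt : IntegrableOn (fun t => ‖u t - uh t‖ + ‖pI t - ph t‖) (Icc (0:ℝ) T) :=
    heInt.norm.add hφInt.norm
  have hconst : IntegrableOn (fun _ : ℝ => K₂ * Ψ) (Icc (0:ℝ) T) :=
    integrableOn_const measure_Icc_lt_top.ne
  have hAInt : IntegrableOn
      (fun t => K₁ * (‖u t - uI t‖ + ‖p t - pI t‖) + K₂ * Ψ) (Icc (0:ℝ) T) :=
    ((hρInt.norm.add hψInt.norm).const_mul K₁).add hconst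
  have hh0 : ∀ t, 0 ≤ ‖u t - uh t‖ + ‖pI t - ph t‖ :=
    fun t => add_nonneg (norm_nonneg _) (norm_nonneg _)
  have hA0 : ∀ t, 0 ≤ K₁ * (‖u t - uI t‖ + ‖p t - pI t‖) + K₂ * Ψ := fun t =>
    add_nonneg (mul_nonneg hK₁0 (add_nonneg (norm_nonneg _) (norm_nonneg _)))
      (mul_nonneg hK₂0 hΨ0)
  have hg := l1_gronwall hT hKK hhInt hAInt hh0 hA0 hmain
  have hAcalc : (∫ t in Icc (0:ℝ) T, (K₁ * (‖u t - uI t‖ + ‖p t - pI t‖) + K₂ * Ψ))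
      = K₁ * (R + Ψ) + K₂ * Ψ * T := by
    have hnρ : IntegrableOn (fun t => ‖u t - uI t‖) (Icc (0:ℝ) T) := hρInt.norm
    have hnψ : IntegrableOn (fun t => ‖p t - pI t‖) (Icc (0:ℝ) T) := hψInt.norm
    have hA1' : IntegrableOn (fun t => K₁ * (‖u t - uI t‖ + ‖p t - pI t‖)) (Icc (0:ℝ) T) :=
      (hnρ.add hnψ).const_mul K₁
    rw [integral_add hA1' hconst, integral_const_mul, integral_add hnρ hnψ,
      setIntegral_const, Real.volume_real_Icc_of_le hT, sub_zero,
      smul_eq_mul, ← hRdef, ← hΨdef]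
    ring
  have hsplit2 : (∫ t in Icc (0:ℝ) T, (‖u t - uh t‖ + ‖pI t - ph t‖))
      = (∫ t in Icc (0:ℝ) T, ‖u t - uh t‖) + ∫ t in Icc (0:ℝ) T, ‖pI t - ph t‖ := by
    have hne : IntegrableOn (fun t => ‖u t - uh t‖) (Icc (0:ℝ) T) := heInt.norm
    have hnφ : IntegrableOn (fun t => ‖pI t - ph t‖) (Icc (0:ℝ) T) := hφInt.norm
    exact integral_add hne hnφ
  have hpbound : (∫ t in Icc (0:ℝ) T, ‖p t - ph t‖)
      ≤ Ψ + ∫ t in Icc (0:ℝ) T, ‖pI t - ph t‖ := by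
    have hpw : ∀ t, ‖p t - ph t‖ ≤ ‖p t - pI t‖ + ‖pI t - ph t‖ := fun t => by
      calc ‖p t - ph t‖ = ‖(p t - pI t) + (pI t - ph t)‖ := by rw [sub_add_sub_cancel]
        _ ≤ _ := norm_add_le _ _
    calc (∫ t in Icc (0:ℝ) T, ‖p t - ph t‖)
        ≤ ∫ t in Icc (0:ℝ) T, (‖p t - pI t‖ + ‖pI t - ph t‖) :=
          integral_mono (hpInt.sub hphInt).norm (hψInt.norm.add hφInt.norm) hpw
      _ = Ψ + ∫ t in Icc (0:ℝ) T, ‖pI t - ph t‖ := by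
          have hnψ : IntegrableOn (fun t => ‖p t - pI t‖) (Icc (0:ℝ) T) := hψInt.norm
          have hnφ : IntegrableOn (fun t => ‖pI t - ph t‖) (Icc (0:ℝ) T) := hφInt.norm
          rw [integral_add hnψ hnφ, ← hΨdef]
  have hin : K₁ * (R + Ψ) + K₂ * Ψ * T ≤ (K₁ + KK * T) * (R + Ψ) := by
    have d1 : 0 ≤ T * (K₂ * R) := mul_nonneg hT (mul_nonneg hK₂0 hR0)
    have d2 : 0 ≤ T * R := mul_nonneg hT hR0
    have d3 : 0 ≤ T * Ψ := mul_nonneg hT hΨ0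
    rw [hKKdef]
    nlinarith [d1, d2, d3]
  have hexp0 : 0 ≤ Real.exp (KK * T) := (Real.exp_pos _).le
  have hfin := mul_le_mul_of_nonneg_left hin hexp0
  rw [hAcalc] at hg
  rw [hCdef]
  nlinarith [hg, hfin, hpbound, hsplit2, hR0, hΨ0]
end
end
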